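/- arXiv:1404.2699 — 11 statements merged into one kernel-verified Lean document; each statement's English description precedes it below -/
import Mathlib

section
/- Let K ≥ 2 be a fixed integer and suppose h(k) > 0 for all k ≥ K. Suppose there exist positive functions A(k), B(k), λ(k), with A(k) < B(k+1) for all k ≥ K, such that (i) A(k) ≤ h(k+1)/h(k) < B(k) for all k ≥ K, and (ii) h(k+2) < λ(k+2) · B(k+1)/(B(k+1) − A(k)) for all k ≥ K. If H_n^{(r)}[h] > 0 for all n ≥ 1 and all r ≥ K−2, then H_n^{(r)}[h] < h(2+r) · ∏_{k=2}^n λ(2k+r) for all n ≥ 2 and all r ≥ K−2. -/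
/-- Hankel determinant of size `n` at offset `r`: `det_{1≤i,j≤n} (h (i+j+r))`. -/
noncomputable def hankel (h : ℕ → ℝ) (n r : ℕ) : ℝ :=
  Matrix.det (Matrix.of fun i j : Fin n => h ((i : ℕ) + (j : ℕ) + 2 + r))

namespace HankelUB

open Matrix

/-- The Hankel matrix itself. -/
noncomputable def Hmat (h : ℕ → ℝ) (n r : ℕ) : Matrix (Fin n) (Fin n) ℝ :=
  Matrix.of fun i j : Fin n => h ((i : ℕ) + (j : ℕ) + 2 + r)

lemma hankel_eq_det (h : ℕ → ℝ) (n r : ℕ) : hankel h n r = (Hmat h n r).det := rfl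

lemma Hmat_isHermitian (h : ℕ → ℝ) (n r : ℕ) : (Hmat h n r).IsHermitian := by
  unfold Matrix.IsHermitian
  ext i j
  simp only [conjTranspose_apply, Hmat, of_apply, star_trivial]
  congr 1
  omega

lemma hankel_one (h : ℕ → ℝ) (r : ℕ) : hankel h 1 r = h (2 + r) := by
  rw [hankel_eq_det, Matrix.det_fin_one]
  simp [Hmat]

/-- The column vector adjoined when passing from size `m` to size `m+1`. -/
noncomputable def vv (h : ℕ → ℝ) (m r : ℕ) : Fin m → ℝ := fun i => h ((i : ℕ) + m + 2 + r)

/-- Same, as an `m × 1` matrix. -/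
noncomputable def Bcol (h : ℕ → ℝ) (m r : ℕ) : Matrix (Fin m) (Fin 1) ℝ :=
  Matrix.of fun i _ => h ((i : ℕ) + m + 2 + r)

noncomputable def Dcor (h : ℕ → ℝ) (m r : ℕ) : Matrix (Fin 1) (Fin 1) ℝ :=
  Matrix.of fun _ _ => h (2 * m + 2 + r)

lemma Hmat_blocks (h : ℕ → ℝ) (m r : ℕ) :
    (Hmat h (m + 1) r).submatrix finSumFinEquiv finSumFinEquiv
      = fromBlocks (Hmat h m r) (Bcol h m r) (Bcol h m r)ᴴ (Dcor h m r) := by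
  ext i j
  obtain (i | i) := i <;> obtain (j | j) := j
  · rfl
  · have hj := j.isLt
    simp only [submatrix_apply, finSumFinEquiv_apply_left, finSumFinEquiv_apply_right,
      fromBlocks_apply₁₂, Hmat, Bcol, of_apply, Fin.coe_castAdd, Fin.coe_natAdd]
    congr 1
    omega
  · have hi := i.isLt
    simp only [submatrix_apply, finSumFinEquiv_apply_left, finSumFinEquiv_apply_right,
      fromBlocks_apply₂₁, Hmat, Bcol, of_apply, conjTranspose_apply, star_trivial,
      Fin.coe_castAdd, Fin.coe_natAdd]
    congr 1
    omega
  · have hi := i.isLt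
    have hj := j.isLt
    simp only [submatrix_apply, finSumFinEquiv_apply_right, fromBlocks_apply₂₂,
      Hmat, Dcor, of_apply, Fin.coe_natAdd]
    congr 1
    omega

lemma posDef_fin_one {S : Matrix (Fin 1) (Fin 1) ℝ} (hs : 0 < S 0 0) : S.PosDef := by
  refine posDef_iff_dotProduct_mulVec.mpr ⟨?_, ?_⟩
  · unfold Matrix.IsHermitian
    ext i j
    fin_cases i <;> fin_cases j <;> simp [conjTranspose_apply]
  · intro x hx
    have hx0 : x 0 ≠ 0 := by
      intro hc
      apply hx
      funext i
      fin_cases i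
      exact hc
    have hq : star x ⬝ᵥ S *ᵥ x = S 0 0 * (x 0 * x 0) := by
      simp [dotProduct, Matrix.mulVec, Fin.sum_univ_one]
      ring
    rw [hq]
    exact mul_pos hs (mul_self_pos.mpr hx0)

lemma posDef_of_submatrix {n p : Type*} [Fintype n] [Fintype p] [DecidableEq n] [DecidableEq p]
    {M : Matrix p p ℝ} (e : n ≃ p) (hM : (M.submatrix e e).PosDef) : M.PosDef := by
  refine posDef_iff_dotProduct_mulVec.mpr ⟨(isHermitian_submatrix_equiv e).mp hM.1, fun x hx => ?_⟩
  have hx' : (x ∘ e) ≠ 0 := by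
    intro hc
    apply hx
    funext i
    have := congrFun hc (e.symm i)
    simpa using this
  have h2 := hM.dotProduct_mulVec_pos hx'
  have key : star (x ∘ e) ⬝ᵥ (M.submatrix e e) *ᵥ (x ∘ e) = star x ⬝ᵥ M *ᵥ x := by
    simp only [dotProduct, mulVec, dotProduct, submatrix_apply, Function.comp_apply,
      Pi.star_apply]
    rw [← Equiv.sum_comp e (fun i => star (x i) * ∑ j, M i j * x j)]
    refine Finset.sum_congr rfl fun i _ => ?_
    congr 1
    rw [← Equiv.sum_comp e (fun j => M (e i) j * x j)]
  rw [← key]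
  exact h2

lemma det_succ (h : ℕ → ℝ) (m r : ℕ) (hA : (Hmat h m r).PosDef) :
    hankel h (m + 1) r
      = hankel h m r *
        (h (2 * m + 2 + r) - vv h m r ⬝ᵥ ((Hmat h m r)⁻¹ *ᵥ vv h m r)) := by
  haveI : Invertible (Hmat h m r) := hA.isUnit.invertible
  rw [hankel_eq_det, hankel_eq_det, ← Matrix.det_submatrix_equiv_self finSumFinEquiv,
    Hmat_blocks, Matrix.det_fromBlocks₁₁, invOf_eq_nonsing_inv, Matrix.det_fin_one]
  congr 1
  simp only [Matrix.sub_apply, Dcor, of_apply]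
  congr 1
  rw [dotProduct_mulVec]
  simp only [Matrix.mul_apply, vecMul, dotProduct, Bcol, vv, of_apply, conjTranspose_apply,
    star_trivial, Fin.sum_univ_one]

lemma posDef_succ (h : ℕ → ℝ) (m r : ℕ) (hA : (Hmat h m r).PosDef)
    (hdet : 0 < (Hmat h (m + 1) r).det) : (Hmat h (m + 1) r).PosDef := by
  haveI : Invertible (Hmat h m r) := hA.isUnit.invertible
  have hb := Hmat_blocks h m r
  have hd : (Hmat h (m + 1) r).det
      = (Hmat h m r).det * ((Dcor h m r - (Bcol h m r)ᴴ * (Hmat h m r)⁻¹ * Bcol h m r) 0 0) := by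
    rw [← Matrix.det_submatrix_equiv_self finSumFinEquiv, hb, Matrix.det_fromBlocks₁₁,
      invOf_eq_nonsing_inv, Matrix.det_fin_one]
  have hApos := hA.det_pos
  have hS0 : 0 < (Dcor h m r - (Bcol h m r)ᴴ * (Hmat h m r)⁻¹ * Bcol h m r) 0 0 := by
    rw [hd] at hdet
    by_contra hc
    push_neg at hc
    nlinarith
  have hSpd : (Dcor h m r - (Bcol h m r)ᴴ * (Hmat h m r)⁻¹ * Bcol h m r).PosDef :=
    posDef_fin_one hS0
  apply posDef_of_submatrix finSumFinEquiv
  rw [hb]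
  refine posDef_iff_dotProduct_mulVec.mpr ⟨?_, ?_⟩
  · rw [← hb]
    exact (isHermitian_submatrix_equiv finSumFinEquiv).mpr (Hmat_isHermitian h (m + 1) r)
  · intro z hz
    have hzdecomp : Sum.elim (z ∘ Sum.inl) (z ∘ Sum.inr) = z := Sum.elim_comp_inl_inr z
    rw [dotProduct_mulVec, ← hzdecomp,
      schur_complement_eq₁₁ (Bcol h m r) (Dcor h m r) (z ∘ Sum.inl) (z ∘ Sum.inr) hA.1]
    set x := z ∘ Sum.inl with hxdef
    set y := z ∘ Sum.inr with hydef
    have t2 : 0 ≤ star y ᵥ* (Dcor h m r - (Bcol h m r)ᴴ * (Hmat h m r)⁻¹ * Bcol h m r) ⬝ᵥ y := by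
      rw [← dotProduct_mulVec]
      exact hSpd.posSemidef.dotProduct_mulVec_nonneg y
    have t1 : 0 ≤ star (x + ((Hmat h m r)⁻¹ * Bcol h m r) *ᵥ y) ᵥ* (Hmat h m r) ⬝ᵥ
        (x + ((Hmat h m r)⁻¹ * Bcol h m r) *ᵥ y) := by
      rw [← dotProduct_mulVec]
      exact hA.posSemidef.dotProduct_mulVec_nonneg _
    by_cases hy : y = 0
    · have hx : x ≠ 0 := by
        intro hc
        apply hz
        rw [← hzdecomp]
        funext i
        obtain (i | i) := i
        · simp [← hxdef, hc]
        · simp [← hydef, hy]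
      have hxy : x + ((Hmat h m r)⁻¹ * Bcol h m r) *ᵥ y = x := by
        rw [hy, mulVec_zero, add_zero]
      rw [hxy]
      have t1' : 0 < star x ᵥ* (Hmat h m r) ⬝ᵥ x := by
        rw [← dotProduct_mulVec]
        exact hA.dotProduct_mulVec_pos hx
      linarith
    · have t2' : 0 < star y ᵥ* (Dcor h m r - (Bcol h m r)ᴴ * (Hmat h m r)⁻¹ * Bcol h m r) ⬝ᵥ y := by
        rw [← dotProduct_mulVec]
        exact hSpd.dotProduct_mulVec_pos hy
      linarith

lemma qlow (h : ℕ → ℝ) (m r : ℕ) (hm : 1 ≤ m) (hA : (Hmat h m r).PosDef)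
    (hk : 0 < h (2 * m + r)) :
    h (2 * m + 1 + r) ^ 2 / h (2 * m + r) ≤ vv h m r ⬝ᵥ ((Hmat h m r)⁻¹ *ᵥ vv h m r) := by
  have hdu : IsUnit (Hmat h m r).det := isUnit_iff_ne_zero.mpr hA.det_pos.ne'
  have hNps : ((Hmat h m r)⁻¹).PosSemidef := hA.inv.posSemidef
  set l : Fin m := ⟨m - 1, by omega⟩ with hl
  set e : Fin m → ℝ := Pi.single l 1 with he
  set y : Fin m → ℝ := (Hmat h m r) *ᵥ e with hy
  have hNy : (Hmat h m r)⁻¹ *ᵥ y = e := by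
    rw [hy, mulVec_mulVec, Matrix.nonsing_inv_mul _ hdu, one_mulVec]
  have hve : vv h m r ⬝ᵥ e = h (2 * m + 1 + r) := by
    rw [he, dotProduct_single, mul_one]
    show h ((l : ℕ) + m + 2 + r) = _
    congr 1
    simp only [hl]
    omega
  have hyl : y = fun i => (Hmat h m r) i l * 1 := by rw [hy, he]; ext i; simp
  have hye : y ⬝ᵥ e = h (2 * m + r) := by
    rw [he, dotProduct_single, mul_one, hyl]
    show (Hmat h m r) l l * 1 = _
    rw [mul_one]
    show h ((l : ℕ) + (l : ℕ) + 2 + r) = _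
    congr 1
    simp only [hl]
    omega
  have hNherm : ((Hmat h m r)⁻¹)ᵀ = (Hmat h m r)⁻¹ := by
    have h1 : ((Hmat h m r)⁻¹)ᴴ = (Hmat h m r)⁻¹ := (hA.inv).isHermitian
    rwa [conjTranspose_eq_transpose_of_trivial] at h1
  have h1 : y ᵥ* (Hmat h m r)⁻¹ = (Hmat h m r)⁻¹ *ᵥ y := by
    rw [← mulVec_transpose, hNherm]
  have hcross : y ⬝ᵥ ((Hmat h m r)⁻¹ *ᵥ vv h m r) = h (2 * m + 1 + r) := by
    rw [dotProduct_mulVec, h1, hNy, he, single_dotProduct, one_mul]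
    show h ((l : ℕ) + m + 2 + r) = _
    congr 1
    simp only [hl]
    omega
  have hvNy : vv h m r ⬝ᵥ ((Hmat h m r)⁻¹ *ᵥ y) = h (2 * m + 1 + r) := by rw [hNy]; exact hve
  have hyNy : y ⬝ᵥ ((Hmat h m r)⁻¹ *ᵥ y) = h (2 * m + r) := by rw [hNy]; exact hye
  set t : ℝ := h (2 * m + 1 + r) / h (2 * m + r) with ht
  have h0 := hNps.dotProduct_mulVec_nonneg (vv h m r - t • y)
  rw [show star (vv h m r - t • y) = vv h m r - t • y from star_trivial _] at h0
  have hexp : (vv h m r - t • y) ⬝ᵥ ((Hmat h m r)⁻¹ *ᵥ (vv h m r - t • y))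
      = vv h m r ⬝ᵥ ((Hmat h m r)⁻¹ *ᵥ vv h m r) - 2 * t * h (2 * m + 1 + r)
        + t ^ 2 * h (2 * m + r) := by
    rw [mulVec_sub, mulVec_smul, dotProduct_sub, sub_dotProduct, sub_dotProduct,
      dotProduct_smul, smul_dotProduct, smul_dotProduct, dotProduct_smul,
      hvNy, hcross, hyNy]
    simp only [smul_eq_mul]
    ring
  rw [hexp] at h0
  have htk : t * h (2 * m + r) = h (2 * m + 1 + r) := by
    rw [ht]
    field_simp
  have ht2 : t ^ 2 * h (2 * m + r) = t * h (2 * m + 1 + r) := by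
    rw [pow_two, mul_assoc, htk]
  rw [div_le_iff₀ hk]
  nlinarith [h0, ht2, htk, hk]

lemma scalar_ineq {x y z a b l q : ℝ} (hx : 0 < x) (hy : 0 < y) (hz : 0 < z) (ha : 0 < a)
    (hb : 0 < b) (hl : 0 < l) (hab : a < b) (h1 : a * x ≤ y) (h2 : z < b * y)
    (h3 : z * (b - a) < l * b) (hq : y ^ 2 / x ≤ q) : z - q < l := by
  have hay : a * y ≤ q := by
    have h4 : a * y ≤ y ^ 2 / x := by
      rw [le_div_iff₀ hx]
      nlinarith
    linarith
  have h5 : a * z < a * (b * y) := mul_lt_mul_of_pos_left h2 ha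
  have h6 : b * (z - a * y) < b * l := by nlinarith
  have h7 : z - a * y < l := lt_of_mul_lt_mul_left h6 hb.le
  linarith

lemma posdef_all (h : ℕ → ℝ) (K : ℕ)
    (hpos : ∀ k ≥ K, 0 < h k)
    (hHpos : ∀ n ≥ 1, ∀ r ≥ K - 2, 0 < hankel h n r) :
    ∀ n, 1 ≤ n → ∀ r, K ≤ r + 2 → (Hmat h n r).PosDef := by
  intro n hn
  induction n, hn using Nat.le_induction with
  | base =>
    intro r hr
    apply posDef_fin_one
    show 0 < h (((0 : Fin 1) : ℕ) + ((0 : Fin 1) : ℕ) + 2 + r)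
    simpa using hpos (2 + r) (by omega)
  | succ n hn ih =>
    intro r hr
    refine posDef_succ h n r (ih r hr) ?_
    rw [← hankel_eq_det]
    exact hHpos (n + 1) (by omega) r (by omega)

lemma step (h A B lam : ℕ → ℝ) (K : ℕ)
    (hpos : ∀ k ≥ K, 0 < h k)
    (hApos : ∀ k ≥ K, 0 < A k) (hBpos : ∀ k ≥ K, 0 < B k) (hlampos : ∀ k ≥ K, 0 < lam k)
    (hAB : ∀ k ≥ K, A k < B (k + 1))
    (hratio : ∀ k ≥ K, A k ≤ h (k + 1) / h k ∧ h (k + 1) / h k < B k)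
    (hgrowth : ∀ k ≥ K, h (k + 2) < lam (k + 2) * (B (k + 1) / (B (k + 1) - A k)))
    (m r : ℕ) (hm : 1 ≤ m) (hr : K ≤ r + 2) (hApd : (Hmat h m r).PosDef) :
    hankel h (m + 1) r < lam (2 * (m + 1) + r) * hankel h m r := by
  have hkK : K ≤ 2 * m + r := by omega
  have hx : 0 < h (2 * m + r) := hpos _ hkK
  have hy : 0 < h (2 * m + 1 + r) := by
    have := hpos (2 * m + r + 1) (by omega)
    rwa [show 2 * m + r + 1 = 2 * m + 1 + r by omega] at this
  have hz : 0 < h (2 * m + 2 + r) := by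
    have := hpos (2 * m + r + 2) (by omega)
    rwa [show 2 * m + r + 2 = 2 * m + 2 + r by omega] at this
  have ha : 0 < A (2 * m + r) := hApos _ hkK
  have hb : 0 < B (2 * m + r + 1) := hBpos _ (by omega)
  have hl : 0 < lam (2 * m + r + 2) := hlampos _ (by omega)
  have hab : A (2 * m + r) < B (2 * m + r + 1) := hAB _ hkK
  have h1 : A (2 * m + r) * h (2 * m + r) ≤ h (2 * m + 1 + r) := by
    have h1' := (hratio _ hkK).1
    rw [le_div_iff₀ hx] at h1'
    rw [show 2 * m + 1 + r = 2 * m + r + 1 by omega]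
    linarith
  have h2 : h (2 * m + 2 + r) < B (2 * m + r + 1) * h (2 * m + 1 + r) := by
    have hy' : 0 < h (2 * m + r + 1) := by
      rwa [show 2 * m + r + 1 = 2 * m + 1 + r by omega]
    have h2' := (hratio (2 * m + r + 1) (by omega)).2
    rw [div_lt_iff₀ hy'] at h2'
    rw [show 2 * m + 2 + r = 2 * m + r + 1 + 1 by omega,
      show 2 * m + 1 + r = 2 * m + r + 1 by omega]
    linarith
  have h3 : h (2 * m + 2 + r) * (B (2 * m + r + 1) - A (2 * m + r))
      < lam (2 * m + r + 2) * B (2 * m + r + 1) := by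
    have h3' := hgrowth _ hkK
    rw [mul_div_assoc'] at h3'
    rw [lt_div_iff₀ (by linarith : (0:ℝ) < B (2 * m + r + 1) - A (2 * m + r))] at h3'
    rw [show 2 * m + 2 + r = 2 * m + r + 2 by omega]
    linarith
  have hq := qlow h m r hm hApd hx
  have hdet := det_succ h m r hApd
  have hHm : 0 < hankel h m r := by
    rw [hankel_eq_det]
    exact hApd.det_pos
  have hs : h (2 * m + 2 + r) - vv h m r ⬝ᵥ ((Hmat h m r)⁻¹ *ᵥ vv h m r)
      < lam (2 * m + r + 2) :=
    scalar_ineq hx hy hz ha hb hl hab h1 h2 h3 hq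
  calc hankel h (m + 1) r
      = hankel h m r * (h (2 * m + 2 + r) - vv h m r ⬝ᵥ ((Hmat h m r)⁻¹ *ᵥ vv h m r)) := hdet
    _ < hankel h m r * lam (2 * m + r + 2) := mul_lt_mul_of_pos_left hs hHm
    _ = lam (2 * (m + 1) + r) * hankel h m r := by
        rw [mul_comm]
        congr 2
        omega

end HankelUB

theorem hankel_upper_bound (h A B lam : ℕ → ℝ) (K : ℕ) (hK : 2 ≤ K)
    (hpos : ∀ k ≥ K, 0 < h k)
    (hApos : ∀ k ≥ K, 0 < A k) (hBpos : ∀ k ≥ K, 0 < B k) (hlampos : ∀ k ≥ K, 0 < lam k)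
    (hAB : ∀ k ≥ K, A k < B (k + 1))
    (hratio : ∀ k ≥ K, A k ≤ h (k + 1) / h k ∧ h (k + 1) / h k < B k)
    (hgrowth : ∀ k ≥ K, h (k + 2) < lam (k + 2) * (B (k + 1) / (B (k + 1) - A k)))
    (hHpos : ∀ n ≥ 1, ∀ r ≥ K - 2, 0 < hankel h n r) :
    ∀ n ≥ 2, ∀ r ≥ K - 2,
      hankel h n r < h (2 + r) * ∏ k ∈ Finset.Icc 2 n, lam (2 * k + r) := by
  intro n hn r hr
  have hr2 : K ≤ r + 2 := by omega
  have pd := HankelUB.posdef_all h K hpos hHpos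
  have st : ∀ m, 1 ≤ m →
      hankel h (m + 1) r < lam (2 * (m + 1) + r) * hankel h m r := fun m hm =>
    HankelUB.step h A B lam K hpos hApos hBpos hlampos hAB hratio hgrowth m r hm hr2
      (pd m hm r hr2)
  induction n, hn using Nat.le_induction with
  | base =>
    have hstep := st 1 le_rfl
    rw [HankelUB.hankel_one] at hstep
    calc hankel h 2 r < lam (2 * (1 + 1) + r) * h (2 + r) := hstep
      _ = h (2 + r) * ∏ k ∈ Finset.Icc 2 2, lam (2 * k + r) := by
          rw [Finset.Icc_self, Finset.prod_singleton, mul_comm]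
  | succ n hn ih =>
    have hstep := st n (by omega)
    have hlpos : 0 < lam (2 * (n + 1) + r) := hlampos _ (by omega)
    have hprod : ∏ k ∈ Finset.Icc 2 (n + 1), lam (2 * k + r)
        = (∏ k ∈ Finset.Icc 2 n, lam (2 * k + r)) * lam (2 * (n + 1) + r) := by
      rw [← Finset.prod_Icc_succ_top (by omega : 2 ≤ n + 1)]
    calc hankel h (n + 1) r < lam (2 * (n + 1) + r) * hankel h n r := hstep
      _ < lam (2 * (n + 1) + r) * (h (2 + r) * ∏ k ∈ Finset.Icc 2 n, lam (2 * k + r)) :=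
          mul_lt_mul_of_pos_left ih hlpos
      _ = h (2 + r) * ∏ k ∈ Finset.Icc 2 (n + 1), lam (2 * k + r) := by
          rw [hprod]
          ring
end

section
/- Let F(s) = Σ_{n≥1} f(n) n^{-s} be an ordinary Dirichlet series with f(n) ≥ 0 for all n, convergent for Re(s) ≥ s₀, such that infinitely many f(n) are nonzero. Then H_n^{(r)}[F] > 0 for all n ≥ 1 and all r ≥ s₀ − 2. -/
/-- Hankel determinant (integer offset) of size `n` at offset `r`:
`det_{1≤i,j≤n} (F (i+j+r))`. -/
noncomputable def hankelZ (F : ℤ → ℝ) (n : ℕ) (r : ℤ) : ℝ :=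
  Matrix.det (Matrix.of fun i j : Fin n => F (((i : ℕ) : ℤ) + ((j : ℕ) : ℤ) + 2 + r))

theorem hankel_nondegenerate_pos (f : ℕ → ℝ) (s₀ : ℝ)
    (hf : ∀ n, 0 ≤ f n)
    (hconv : ∀ s : ℝ, s₀ ≤ s → Summable (fun m : ℕ => f (m + 1) / ((m + 1 : ℕ) : ℝ) ^ s))
    (hinf : {n : ℕ | f n ≠ 0}.Infinite)
    (F : ℤ → ℝ) (hF : ∀ k : ℤ, F k = ∑' m : ℕ, f (m + 1) / (((m + 1 : ℕ) : ℝ)) ^ (k : ℤ)) :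
    ∀ n ≥ 1, ∀ r : ℤ, (r : ℝ) ≥ s₀ - 2 → 0 < hankelZ F n r := by
  intro n _hn r hr
  set b : ℕ → ℝ := fun m => ((m + 1 : ℕ) : ℝ) with hbdef
  have hbpos : ∀ m, 0 < b m := by
    intro m; simp only [hbdef]; positivity
  have hbne : ∀ m, b m ≠ 0 := fun m => (hbpos m).ne'
  -- summability at integer exponents ≥ s₀
  have hsum : ∀ k : ℤ, s₀ ≤ (k : ℝ) → Summable (fun m : ℕ => f (m + 1) / b m ^ k) := by
    intro k hk
    have h := hconv (k : ℝ) hk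
    have h2 : (fun m : ℕ => f (m + 1) / ((m + 1 : ℕ) : ℝ) ^ ((k : ℤ) : ℝ)) =
        fun m : ℕ => f (m + 1) / b m ^ k := by
      funext m; rw [Real.rpow_intCast]
    rwa [h2] at h
  set M : Matrix (Fin n) (Fin n) ℝ :=
    Matrix.of fun i j : Fin n => F (((i : ℕ) : ℤ) + ((j : ℕ) : ℤ) + 2 + r) with hM
  -- exponents used in the matrix
  set k : Fin n → Fin n → ℤ := fun i j => ((i : ℕ) : ℤ) + ((j : ℕ) : ℤ) + 2 + r with hk
  have hks : ∀ i j : Fin n, s₀ ≤ ((k i j : ℤ) : ℝ) := by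
    intro i j
    have h1 : (0 : ℝ) ≤ ((i : ℕ) : ℝ) := Nat.cast_nonneg _
    have h2 : (0 : ℝ) ≤ ((j : ℕ) : ℝ) := Nat.cast_nonneg _
    have : ((k i j : ℤ) : ℝ) = ((i : ℕ) : ℝ) + ((j : ℕ) : ℝ) + 2 + (r : ℝ) := by
      simp only [hk]; push_cast; ring
    rw [this]; linarith
  -- nodes and weights
  set t : ℕ → ℝ := fun m => (b m)⁻¹ with ht
  set c : ℕ → ℝ := fun m => f (m + 1) * b m ^ (-(2 + r)) with hc
  have hcnonneg : ∀ m, 0 ≤ c m := fun m =>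
    mul_nonneg (hf _) (le_of_lt (zpow_pos (hbpos m) _))
  have htinj : Function.Injective t := by
    intro a a' h
    have hb : b a = b a' := inv_injective h
    have : a + 1 = a' + 1 := Nat.cast_injective hb
    omega
  -- positive definiteness
  have hPD : M.PosDef := by
    rw [Matrix.posDef_iff_dotProduct_mulVec]
    constructor
    · -- Hermitian
      ext i j
      simp only [Matrix.conjTranspose_apply, hM, Matrix.of_apply, star_trivial]
      congr 1; ring
    · intro x hx
      rw [star_trivial]
      -- the polynomial P with coefficients x
      set P : Polynomial ℝ := ∑ i : Fin n, Polynomial.C (x i) * Polynomial.X ^ (i : ℕ)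
        with hP
      have hPcoeff : ∀ i : Fin n, P.coeff (i : ℕ) = x i := by
        intro i
        rw [hP, Polynomial.finset_sum_coeff]
        rw [Finset.sum_eq_single i]
        · simp
        · intro j _ hji
          simp only [Polynomial.coeff_C_mul, Polynomial.coeff_X_pow]
          rw [if_neg (fun h => hji (Fin.val_injective h).symm), mul_zero]
        · simp
      have hP0 : P ≠ 0 := by
        obtain ⟨i, hi⟩ := Function.ne_iff.mp hx
        intro h
        apply hi
        rw [Pi.zero_apply, ← hPcoeff i, h, Polynomial.coeff_zero]
      have hPeval : ∀ m, P.eval (t m) = ∑ i : Fin n, x i * t m ^ (i : ℕ) := by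
        intro m; simp [hP, Polynomial.eval_finset_sum]
      -- per-index summability
      have hsumk : ∀ i j : Fin n,
          Summable (fun m => x i * x j * (f (m + 1) / b m ^ (k i j))) := by
        intro i j
        exact (hsum (k i j) (hks i j)).mul_left _
      -- pointwise identity
      have hpoint : ∀ m : ℕ,
          (∑ i : Fin n, ∑ j : Fin n, x i * x j * (f (m + 1) / b m ^ (k i j)))
            = c m * (P.eval (t m)) ^ 2 := by
        intro m
        rw [hPeval]
        simp only [hc, hk, ht]
        rw [sq, Finset.sum_mul_sum, Finset.mul_sum]
        refine Finset.sum_congr rfl fun i _ => ?_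
        rw [Finset.mul_sum]
        refine Finset.sum_congr rfl fun j _ => ?_
        have hbexp : b m ^ (((i : ℕ) : ℤ) + ((j : ℕ) : ℤ) + 2 + r)
            = b m ^ (i : ℕ) * b m ^ (j : ℕ) * b m ^ (2 + r) := by
          rw [show ((i : ℕ) : ℤ) + ((j : ℕ) : ℤ) + 2 + r
              = ((i : ℕ) : ℤ) + (((j : ℕ) : ℤ) + (2 + r)) by ring,
            zpow_add₀ (hbne m), zpow_add₀ (hbne m), zpow_natCast, zpow_natCast]
          ring
        rw [hbexp, zpow_neg]
        have hbi : (b m) ^ (i : ℕ) ≠ 0 := pow_ne_zero _ (hbne m)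
        have hbj : (b m) ^ (j : ℕ) ≠ 0 := pow_ne_zero _ (hbne m)
        have hbr : (b m) ^ (2 + r) ≠ 0 := zpow_ne_zero _ (hbne m)
        simp only [inv_pow]
        field_simp
      -- the quadratic form identity
      have hQF : dotProduct x (M.mulVec x) = ∑' m, c m * (P.eval (t m)) ^ 2 := by
        have h1 : dotProduct x (M.mulVec x)
            = ∑ i : Fin n, ∑ j : Fin n, x i * x j * F (k i j) := by
          simp only [dotProduct, Matrix.mulVec, hM, Matrix.of_apply, Finset.mul_sum]
          exact Finset.sum_congr rfl fun i _ => Finset.sum_congr rfl fun j _ => by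
            simp only [hk]; ring
        have h2 : ∀ i j : Fin n, x i * x j * F (k i j)
            = ∑' m, x i * x j * (f (m + 1) / b m ^ (k i j)) := by
          intro i j
          rw [hF (k i j), tsum_mul_left]
        rw [h1]
        rw [tsum_congr hpoint |>.symm]
        rw [Summable.tsum_finsetSum (fun i (_ : i ∈ Finset.univ) => summable_sum (fun j _ => hsumk i j))]
        refine Finset.sum_congr rfl fun i _ => ?_
        rw [Summable.tsum_finsetSum (fun j (_ : j ∈ Finset.univ) => hsumk i j)]
        exact Finset.sum_congr rfl fun j _ => h2 i j
      rw [hQF]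
      -- summability of the weight series
      have hSummQ : Summable fun m => c m * (P.eval (t m)) ^ 2 := by
        have h := summable_sum (s := (Finset.univ : Finset (Fin n)))
          (fun i _ => summable_sum (s := (Finset.univ : Finset (Fin n)))
            (fun j _ => hsumk i j))
        exact h.congr hpoint
      -- find a good index m₀
      have hbadfin : (t ⁻¹' {y : ℝ | P.IsRoot y}).Finite :=
        Set.Finite.preimage htinj.injOn (Polynomial.finite_setOf_isRoot hP0)
      have hS : {m : ℕ | f (m + 1) ≠ 0}.Infinite := by
        have h1 : ({n' : ℕ | f n' ≠ 0} \ {0}).Infinite :=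
          hinf.diff (Set.finite_singleton 0)
        have h2 : ({n' : ℕ | f n' ≠ 0} \ {0}) ⊆ Set.range (fun m : ℕ => m + 1) := by
          rintro n' ⟨hn1, hn2⟩
          rcases n' with _ | m
          · exact absurd rfl hn2
          · exact ⟨m, rfl⟩
        have h3 := h1.preimage (f := fun m : ℕ => m + 1) h2
        refine h3.mono ?_
        intro m hm
        exact hm.1
      obtain ⟨m₀, hm₀S, hm₀bad⟩ := (hS.diff hbadfin).nonempty
      have hcm₀ : 0 < c m₀ :=
        mul_pos (lt_of_le_of_ne (hf _) (Ne.symm hm₀S)) (zpow_pos (hbpos m₀) _)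
      have hev : P.eval (t m₀) ≠ 0 := hm₀bad
      refine Summable.tsum_pos hSummQ (fun m => mul_nonneg (hcnonneg m) (sq_nonneg _)) m₀ ?_
      exact mul_pos hcm₀ (sq_pos_of_ne_zero hev)
  have := hPD.det_pos
  simpa [hankelZ, hM] using this
end

section
/- Let F(s) = Σ_{n≥1} f(n) n^{-s} be a nondegenerate ordinary Dirichlet series with f(n) ≥ 0, convergent for Re(s) ≥ s₀. Let N < M be the two minimal indices of nonzero coefficients and suppose N > 1. With α = log M / log N, then lim_{s→∞} (f(N) N^{(α−1)s}/(f(M)(1 − N^{1−α}))) · (1 − N·F(s+1)/F(s)) = 1, where the limit is over real s → ∞. -/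
open Filter Real

set_option maxHeartbeats 2000000 in
theorem ratio_asymptotic_N_gt_one (f : ℕ → ℝ) (s₀ : ℝ) (N M : ℕ)
    (hf : ∀ n, 0 ≤ f n)
    (hconv : ∀ s : ℝ, s₀ ≤ s → Summable (fun m : ℕ => f (m + 1) / ((m + 1 : ℕ) : ℝ) ^ s))
    (hinf : {n : ℕ | f n ≠ 0}.Infinite)
    (hN : 1 < N) (hNM : N < M) (hfN : f N ≠ 0) (hfM : f M ≠ 0)
    (hminN : ∀ m : ℕ, 1 ≤ m → m < N → f m = 0)
    (hminM : ∀ m : ℕ, N < m → m < M → f m = 0)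
    (F : ℝ → ℝ) (hF : ∀ s : ℝ, F s = ∑' m : ℕ, f (m + 1) / (((m + 1 : ℕ) : ℝ)) ^ s) :
    Tendsto (fun s : ℝ =>
        (f N * (N : ℝ) ^ ((Real.log M / Real.log N - 1) * s) /
          (f M * (1 - (N : ℝ) ^ (1 - Real.log M / Real.log N)))) *
          (1 - (N : ℝ) * (F (s + 1) / F s)))
      atTop (nhds 1) := by
  have hN1 : (1:ℝ) < (N:ℝ) := by exact_mod_cast hN
  have hM1 : (1:ℝ) < (M:ℝ) := by exact_mod_cast hN.trans hNM
  have hNM' : (N:ℝ) < (M:ℝ) := by exact_mod_cast hNM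
  have hNpos : (0:ℝ) < (N:ℝ) := by linarith
  have hMpos : (0:ℝ) < (M:ℝ) := by linarith
  have hM1pos : (0:ℝ) < (M:ℝ) + 1 := by linarith
  have hlogN : Real.log N ≠ 0 := ne_of_gt (Real.log_pos hN1)
  set α := Real.log M / Real.log N with hα
  have hαlog : α * Real.log N = Real.log M := div_mul_cancel₀ _ hlogN
  have hfNpos : 0 < f N := (hf N).lt_of_ne (Ne.symm hfN)
  have hfMpos : 0 < f M := (hf M).lt_of_ne (Ne.symm hfM)
  -- rpow identities
  have hNα : ∀ s : ℝ, (N:ℝ) ^ ((α - 1) * s) = (M:ℝ) ^ s / (N:ℝ) ^ s := by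
    intro s
    rw [Real.rpow_def_of_pos hNpos, Real.rpow_def_of_pos hMpos, Real.rpow_def_of_pos hNpos,
      ← Real.exp_sub]
    congr 1
    have : Real.log N * ((α - 1) * s) = α * Real.log N * s - Real.log N * s := by ring
    rw [this, hαlog]
  have hN1α : (N:ℝ) ^ (1 - α) = (N:ℝ) / (M:ℝ) := by
    rw [Real.rpow_def_of_pos hNpos]
    have : Real.log N * (1 - α) = Real.log N - α * Real.log N := by ring
    rw [this, hαlog, Real.exp_sub, Real.exp_log hNpos, Real.exp_log hMpos]
  -- the tail
  set R : ℝ → ℝ := fun s => ∑' m : ℕ, f (m + M + 1) / ((m + M + 1 : ℕ) : ℝ) ^ s with hRdef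
  have hRsum : ∀ s : ℝ, s₀ ≤ s → Summable (fun m : ℕ => f (m + M + 1) / ((m + M + 1 : ℕ) : ℝ) ^ s) := by
    intro s hs
    have := (summable_nat_add_iff (f := fun m : ℕ => f (m + 1) / ((m + 1 : ℕ) : ℝ) ^ s) M).2
      (hconv s hs)
    exact this
  -- decomposition of F
  have hFdec : ∀ s : ℝ, s₀ ≤ s → F s = f N / (N:ℝ) ^ s + f M / (M:ℝ) ^ s + R s := by
    intro s hs
    rw [hF s, ← Summable.sum_add_tsum_nat_add M (hconv s hs)]
    congr 1
    have hsub : ({N - 1, M - 1} : Finset ℕ) ⊆ Finset.range M := by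
      intro i hi
      simp only [Finset.mem_insert, Finset.mem_singleton] at hi
      rcases hi with h | h <;> simp [Finset.mem_range] <;> omega
    rw [← Finset.sum_subset hsub]
    · rw [Finset.sum_pair (by omega : N - 1 ≠ M - 1)]
      have h1 : N - 1 + 1 = N := by omega
      have h2 : M - 1 + 1 = M := by omega
      rw [h1, h2]
    · intro i hi hnot
      simp only [Finset.mem_insert, Finset.mem_singleton, not_or] at hnot
      have hiM : i < M := Finset.mem_range.1 hi
      have : f (i + 1) = 0 := by
        rcases lt_or_ge (i + 1) N with h | h
        · exact hminN (i + 1) (by omega) h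
        · rcases eq_or_lt_of_le h with h' | h'
          · omega
          · exact hminM (i + 1) h' (by omega)
      simp [this]
  have hRnonneg : ∀ s : ℝ, 0 ≤ R s := fun s =>
    tsum_nonneg fun m => div_nonneg (hf _) (Real.rpow_nonneg (Nat.cast_nonneg _) s)
  set C₀ := R s₀ with hC₀
  have hRle : ∀ s : ℝ, s₀ ≤ s → R s ≤ ((M:ℝ)+1) ^ (s₀ - s) * C₀ := by
    intro s hs
    have hterm : ∀ m : ℕ, f (m + M + 1) / ((m + M + 1 : ℕ):ℝ) ^ s ≤
        ((M:ℝ)+1) ^ (s₀ - s) * (f (m + M + 1) / ((m + M + 1 : ℕ):ℝ) ^ s₀) := by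
      intro m
      have hmnn : (0:ℝ) ≤ (m:ℝ) := Nat.cast_nonneg m
      have hn1 : ((M:ℝ)+1) ≤ ((m + M + 1 : ℕ):ℝ) := by push_cast; linarith
      have hnpos : (0:ℝ) < ((m + M + 1:ℕ):ℝ) := by positivity
      have h1 : f (m + M + 1) / ((m + M + 1:ℕ):ℝ) ^ s
          = (f (m + M + 1) / ((m + M + 1:ℕ):ℝ) ^ s₀) * ((m + M + 1:ℕ):ℝ) ^ (s₀ - s) := by
        rw [Real.rpow_sub hnpos]
        have h2 : ((m + M + 1:ℕ):ℝ) ^ s ≠ 0 := (Real.rpow_pos_of_pos hnpos s).ne'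
        have h3 : ((m + M + 1:ℕ):ℝ) ^ s₀ ≠ 0 := (Real.rpow_pos_of_pos hnpos s₀).ne'
        field_simp
      rw [h1, mul_comm (((M:ℝ)+1) ^ (s₀ - s))]
      refine mul_le_mul_of_nonneg_left ?_ (div_nonneg (hf _) (Real.rpow_nonneg hnpos.le s₀))
      exact Real.rpow_le_rpow_of_nonpos hM1pos hn1 (by linarith)
    calc R s ≤ ∑' m : ℕ, ((M:ℝ)+1) ^ (s₀ - s) * (f (m + M + 1) / ((m + M + 1 : ℕ):ℝ) ^ s₀) :=
          Summable.tsum_le_tsum hterm (hRsum s hs) ((hRsum s₀ le_rfl).mul_left _)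
      _ = ((M:ℝ)+1) ^ (s₀ - s) * C₀ := tsum_mul_left
  have hRlim : ∀ b : ℝ, 0 < b → b < (M:ℝ)+1 →
      Tendsto (fun s : ℝ => R s * b ^ s) atTop (nhds 0) := by
    intro b hb hbM
    have hq : (0:ℝ) < b / ((M:ℝ)+1) := by positivity
    have hbase : Tendsto (fun s : ℝ => C₀ * ((M:ℝ)+1) ^ s₀ * (b / ((M:ℝ)+1)) ^ s)
        atTop (nhds 0) := by
      have h0 : Tendsto (fun s : ℝ => (b / ((M:ℝ)+1)) ^ s) atTop (nhds 0) :=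
        tendsto_rpow_atTop_of_base_lt_one _ (by linarith) ((div_lt_one hM1pos).2 hbM)
      simpa using h0.const_mul (C₀ * ((M:ℝ)+1) ^ s₀)
    refine squeeze_zero' ?_ ?_ hbase
    · filter_upwards with s
      exact mul_nonneg (hRnonneg s) (Real.rpow_nonneg hb.le s)
    · filter_upwards [eventually_ge_atTop s₀] with s hs
      have h1 : R s * b ^ s ≤ (((M:ℝ)+1) ^ (s₀ - s) * C₀) * b ^ s :=
        mul_le_mul_of_nonneg_right (hRle s hs) (Real.rpow_nonneg hb.le s)
      refine h1.trans (le_of_eq ?_)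
      rw [Real.div_rpow hb.le hM1pos.le, Real.rpow_sub hM1pos]
      have h2 : ((M:ℝ)+1) ^ s ≠ 0 := (Real.rpow_pos_of_pos hM1pos s).ne'
      field_simp
  have hNs : ∀ s : ℝ, (0:ℝ) < (N:ℝ) ^ s := fun s => Real.rpow_pos_of_pos hNpos s
  have hMs : ∀ s : ℝ, (0:ℝ) < (M:ℝ) ^ s := fun s => Real.rpow_pos_of_pos hMpos s
  have hg : Tendsto (fun s : ℝ => F s * (N:ℝ) ^ s) atTop (nhds (f N)) := by
    have h1 : Tendsto (fun s : ℝ => ((N:ℝ)/(M:ℝ)) ^ s) atTop (nhds 0) := by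
      have : (0:ℝ) < (N:ℝ)/(M:ℝ) := by positivity
      exact tendsto_rpow_atTop_of_base_lt_one _ (by linarith) ((div_lt_one hMpos).2 hNM')
    have h2 := hRlim (N:ℝ) hNpos (by linarith)
    have hlim : Tendsto (fun s : ℝ => f N + f M * ((N:ℝ)/(M:ℝ)) ^ s + R s * (N:ℝ) ^ s)
        atTop (nhds (f N)) := by
      simpa using (tendsto_const_nhds.add (h1.const_mul (f M))).add h2
    refine hlim.congr' ?_
    filter_upwards [eventually_ge_atTop s₀] with s hs
    rw [hFdec s hs, Real.div_rpow hNpos.le hMpos.le]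
    have h3 := (hNs s).ne'
    have h4 := (hMs s).ne'
    field_simp
  have hh : Tendsto (fun s : ℝ => (F s - (N:ℝ) * F (s+1)) * (M:ℝ) ^ s) atTop
      (nhds (f M * (1 - (N:ℝ)/(M:ℝ)))) := by
    have h2 := hRlim (M:ℝ) hMpos (by linarith)
    have h3 : Tendsto (fun s : ℝ => R (s+1) * (M:ℝ) ^ (s+1)) atTop (nhds 0) :=
      h2.comp (tendsto_atTop_add_const_right atTop 1 tendsto_id)
    have hlim : Tendsto (fun s : ℝ => f M * (1 - (N:ℝ)/(M:ℝ)) + R s * (M:ℝ) ^ s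
        - (N:ℝ)/(M:ℝ) * (R (s+1) * (M:ℝ) ^ (s+1))) atTop
        (nhds (f M * (1 - (N:ℝ)/(M:ℝ)))) := by
      simpa using (tendsto_const_nhds.add h2).sub (h3.const_mul ((N:ℝ)/(M:ℝ)))
    refine hlim.congr' ?_
    filter_upwards [eventually_ge_atTop s₀] with s hs
    rw [hFdec s hs, hFdec (s+1) (by linarith), Real.rpow_add_one hNpos.ne',
      Real.rpow_add_one hMpos.ne']
    have h4 := (hNs s).ne'
    have h5 := (hMs s).ne'
    field_simp
    ring
  have hFpos : ∀ s : ℝ, s₀ ≤ s → 0 < F s := by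
    intro s hs
    rw [hFdec s hs]
    have h1 : 0 < f N / (N:ℝ) ^ s := div_pos hfNpos (hNs s)
    have h2 : 0 ≤ f M / (M:ℝ) ^ s := div_nonneg hfMpos.le (hMs s).le
    linarith [hRnonneg s]
  have hKpos : 0 < f M * (1 - (N:ℝ)/(M:ℝ)) := by
    have : (N:ℝ)/(M:ℝ) < 1 := (div_lt_one hMpos).2 hNM'
    have : 0 < 1 - (N:ℝ)/(M:ℝ) := by linarith
    positivity
  have key : Tendsto (fun s : ℝ => (f N / (F s * (N:ℝ) ^ s)) *
      (((F s - (N:ℝ) * F (s+1)) * (M:ℝ) ^ s) / (f M * (1 - (N:ℝ)/(M:ℝ))))) atTop (nhds 1) := by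
    have t1 : Tendsto (fun s : ℝ => f N / (F s * (N:ℝ) ^ s)) atTop (nhds (f N / f N)) :=
      tendsto_const_nhds.div hg hfN
    have t2 : Tendsto (fun s : ℝ => ((F s - (N:ℝ) * F (s+1)) * (M:ℝ) ^ s) /
        (f M * (1 - (N:ℝ)/(M:ℝ)))) atTop
        (nhds ((f M * (1 - (N:ℝ)/(M:ℝ))) / (f M * (1 - (N:ℝ)/(M:ℝ))))) :=
      hh.div tendsto_const_nhds hKpos.ne'
    rw [div_self hfN] at t1
    rw [div_self hKpos.ne'] at t2
    simpa using t1.mul t2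
  refine key.congr' ?_
  filter_upwards [eventually_ge_atTop s₀] with s hs
  rw [hNα s, hN1α]
  have hFne := (hFpos s hs).ne'
  have h3 := (hNs s).ne'
  have h4 := (hMs s).ne'
  have h1 : 1 - (N:ℝ) * (F (s+1) / F s) = (F s - (N:ℝ) * F (s+1)) / F s := by
    field_simp
  rw [h1]
  field_simp
end

section
/- Let F(s) = Σ_{n≥1} f(n) n^{-s} be a nondegenerate ordinary Dirichlet series with f(n) ≥ 0, convergent for Re(s) ≥ s₀, with f(1) ≠ 0, and let M be the second smallest index with f(M) ≠ 0. Then there exist constants c₁ > 0 and K₁ ≥ s₀ such that for all real s ≥ K₁: 0 < 1 − c₁/M^s ≤ F(s+1)/F(s) < 1. -/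
open Real

theorem ratio_bounds_N_eq_one (f : ℕ → ℝ) (s₀ : ℝ) (M : ℕ)
    (hf : ∀ n, 0 ≤ f n)
    (hconv : ∀ s : ℝ, s₀ ≤ s → Summable (fun m : ℕ => f (m + 1) / ((m + 1 : ℕ) : ℝ) ^ s))
    (hinf : {n : ℕ | f n ≠ 0}.Infinite)
    (hf1 : f 1 ≠ 0) (hM : 1 < M) (hfM : f M ≠ 0)
    (hmin : ∀ m : ℕ, 1 < m → m < M → f m = 0)
    (F : ℝ → ℝ) (hF : ∀ s : ℝ, F s = ∑' m : ℕ, f (m + 1) / (((m + 1 : ℕ) : ℝ)) ^ s) :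
    ∃ c₁ > 0, ∃ K₁ ≥ s₀, ∀ s ≥ K₁,
      0 < 1 - c₁ / (M : ℝ) ^ s ∧ 1 - c₁ / (M : ℝ) ^ s ≤ F (s + 1) / F s ∧
        F (s + 1) / F s < 1 := by
  have hf1' : 0 < f 1 := (hf 1).lt_of_ne (Ne.symm hf1)
  have hfM' : 0 < f M := (hf M).lt_of_ne (Ne.symm hfM)
  have hM0 : (0 : ℝ) < M := by positivity
  have hM1 : (1 : ℝ) < M := by exact_mod_cast hM
  set g : ℝ → ℕ → ℝ := fun s m => f (m + 1) / ((m + 1 : ℕ) : ℝ) ^ s with hg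
  have hn1 : ∀ m : ℕ, (1 : ℝ) ≤ ((m + 1 : ℕ) : ℝ) := by
    intro m; exact_mod_cast Nat.one_le_iff_ne_zero.2 (Nat.succ_ne_zero m)
  have hn0 : ∀ m : ℕ, (0 : ℝ) < ((m + 1 : ℕ) : ℝ) := fun m => lt_of_lt_of_le one_pos (hn1 m)
  have hgnn : ∀ s m, 0 ≤ g s m := fun s m =>
    div_nonneg (hf _) (rpow_nonneg (hn0 m).le _)
  have hFg : ∀ s, F s = ∑' m, g s m := hF
  have hFge : ∀ s, s₀ ≤ s → f 1 ≤ F s := by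
    intro s hs
    rw [hFg]
    have := Summable.le_tsum (hconv s hs) 0 (fun i _ => hgnn s i)
    simpa [g, one_rpow] using this
  have hFpos : ∀ s, s₀ ≤ s → 0 < F s := fun s hs => lt_of_lt_of_le hf1' (hFge s hs)
  have hMsub : M - 1 + 1 = M := by omega
  set T : ℝ := ∑' m, g s₀ m with hT
  have hTpos : 0 < T := by
    have h1 : g s₀ (M - 1) ≤ T := Summable.le_tsum (hconv s₀ le_rfl) _ (fun i _ => hgnn s₀ i)
    refine lt_of_lt_of_le ?_ h1
    simp only [g, hMsub]
    exact div_pos hfM' (rpow_pos_of_pos hM0 _)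
  set c₁ : ℝ := T * (M : ℝ) ^ s₀ / f 1 with hc₁
  have hc₁pos : 0 < c₁ := by
    have : (0:ℝ) < (M : ℝ) ^ s₀ := rpow_pos_of_pos hM0 _
    positivity
  refine ⟨c₁, hc₁pos, max s₀ (logb M c₁ + 1), le_max_left _ _, ?_⟩
  intro s hs
  have hss₀ : s₀ ≤ s := le_trans (le_max_left _ _) hs
  have hss₀' : s₀ ≤ s + 1 := by linarith
  have hclt : c₁ < (M : ℝ) ^ s := by
    have h1 : logb M c₁ < s := by
      have := le_trans (le_max_right s₀ (logb M c₁ + 1)) hs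
      linarith
    calc c₁ = (M : ℝ) ^ (logb M c₁) := (rpow_logb hM0 (ne_of_gt hM1) hc₁pos).symm
      _ < (M : ℝ) ^ s := rpow_lt_rpow_of_exponent_lt hM1 h1
  have hMs : (0 : ℝ) < (M : ℝ) ^ s := rpow_pos_of_pos hM0 s
  have hpos : 0 < 1 - c₁ / (M : ℝ) ^ s := by
    have : c₁ / (M : ℝ) ^ s < 1 := (div_lt_one hMs).2 hclt
    linarith
  have hsum1 := hconv s hss₀
  have hsum2 := hconv (s + 1) hss₀'
  refine ⟨hpos, ?_, ?_⟩
  · -- lower bound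
    have hdle : ∀ m, g s m - g (s + 1) m ≤ g s₀ m * (M : ℝ) ^ (s₀ - s) := by
      intro m
      rcases lt_or_ge (m + 1) M with hlt | hge
      · have hz : g s m - g (s + 1) m = 0 := by
          rcases Nat.eq_zero_or_pos m with rfl | hm
          · simp [g, one_rpow]
          · have : f (m + 1) = 0 := hmin (m + 1) (by omega) hlt
            simp [g, this]
        rw [hz]
        have : (0:ℝ) < (M : ℝ) ^ (s₀ - s) := rpow_pos_of_pos hM0 _
        have := hgnn s₀ m
        positivity
      · have h1 : g s m - g (s + 1) m ≤ g s m := by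
          have := hgnn (s + 1) m; linarith
        refine h1.trans ?_
        have hnM : (M : ℝ) ≤ ((m + 1 : ℕ) : ℝ) := by exact_mod_cast hge
        have key : ((m + 1 : ℕ) : ℝ) ^ (s₀ - s) ≤ (M : ℝ) ^ (s₀ - s) :=
          rpow_le_rpow_of_nonpos hM0 hnM (by linarith)
        have e1 : g s m = g s₀ m * ((m + 1 : ℕ) : ℝ) ^ (s₀ - s) := by
          have hsplit : ((m + 1 : ℕ) : ℝ) ^ s
              = ((m + 1 : ℕ) : ℝ) ^ s₀ * ((m + 1 : ℕ) : ℝ) ^ (s - s₀) := by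
            rw [← rpow_add (hn0 m)]; ring_nf
          simp only [g]
          rw [hsplit, ← div_div, div_eq_mul_inv (f (m + 1) / _),
            ← rpow_neg (hn0 m).le, neg_sub]
        rw [e1]
        exact mul_le_mul_of_nonneg_left key (hgnn s₀ m)
    have hsums : Summable fun m => g s₀ m * (M : ℝ) ^ (s₀ - s) :=
      (hconv s₀ le_rfl).mul_right _
    have hbound : F s - F (s + 1) ≤ T * (M : ℝ) ^ (s₀ - s) := by
      have := Summable.tsum_le_tsum hdle (hsum1.sub hsum2) hsums
      rw [hFg, hFg, ← Summable.tsum_sub hsum1 hsum2]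
      calc (∑' m, (g s m - g (s + 1) m)) ≤ ∑' m, g s₀ m * (M : ℝ) ^ (s₀ - s) := this
        _ = T * (M : ℝ) ^ (s₀ - s) := (hconv s₀ le_rfl).tsum_mul_right _
    have heq : T * (M : ℝ) ^ (s₀ - s) = c₁ * f 1 / (M : ℝ) ^ s := by
      rw [hc₁, rpow_sub hM0]
      field_simp
    have hbound2 : F s - F (s + 1) ≤ c₁ * F s / (M : ℝ) ^ s := by
      rw [heq] at hbound
      refine hbound.trans ?_
      have := hFge s hss₀
      gcongr
    rw [le_div_iff₀ (hFpos s hss₀)]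
    have hring : (1 - c₁ / (M : ℝ) ^ s) * F s = F s - c₁ * F s / (M : ℝ) ^ s := by ring
    linarith [hbound2, hring.le]
  · -- upper bound
    have hlt : F (s + 1) < F s := by
      rw [hFg, hFg]
      refine Summable.tsum_lt_tsum (i := M - 1) (fun m => ?_) ?_ hsum2 hsum1
      · simp only [g]
        gcongr
        · exact hf _
        · exact hn1 m
        · linarith
      · simp only [g, hMsub]
        exact div_lt_div_of_pos_left hfM' (rpow_pos_of_pos hM0 _)
          (rpow_lt_rpow_of_exponent_lt hM1 (by linarith))
    exact (div_lt_one (hFpos s hss₀)).2 hlt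
end

section
/- Let F(s) = Σ_{n≥1} f(n) n^{-s} be a nondegenerate ordinary Dirichlet series with f(n) ≥ 0, convergent for Re(s) ≥ s₀. Let N < M be the two minimal indices of nonzero coefficients, with N > 1, and set α = log M / log N. Then there exist constants c₂ > 0 and K₂ ≥ s₀ such that for all real s ≥ K₂: 0 < 1/N − c₂/N^{(α−1)s} ≤ F(s+1)/F(s) < 1/N. -/
open Real

theorem ratio_bounds_N_gt_one (f : ℕ → ℝ) (s₀ : ℝ) (N M : ℕ)
    (hf : ∀ n, 0 ≤ f n)
    (hconv : ∀ s : ℝ, s₀ ≤ s → Summable (fun m : ℕ => f (m + 1) / ((m + 1 : ℕ) : ℝ) ^ s))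
    (hinf : {n : ℕ | f n ≠ 0}.Infinite)
    (hN : 1 < N) (hNM : N < M) (hfN : f N ≠ 0) (hfM : f M ≠ 0)
    (hminN : ∀ m : ℕ, 1 ≤ m → m < N → f m = 0)
    (hminM : ∀ m : ℕ, N < m → m < M → f m = 0)
    (F : ℝ → ℝ) (hF : ∀ s : ℝ, F s = ∑' m : ℕ, f (m + 1) / (((m + 1 : ℕ) : ℝ)) ^ s) :
    ∃ c₂ > 0, ∃ K₂ ≥ s₀, ∀ s ≥ K₂,
      0 < 1 / (N : ℝ) - c₂ / (N : ℝ) ^ ((Real.log M / Real.log N - 1) * s) ∧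
        1 / (N : ℝ) - c₂ / (N : ℝ) ^ ((Real.log M / Real.log N - 1) * s) ≤ F (s + 1) / F s ∧
          F (s + 1) / F s < 1 / (N : ℝ) := by
  have hN1 : (1:ℝ) < (N:ℝ) := by exact_mod_cast hN
  have hNpos : (0:ℝ) < N := lt_trans one_pos hN1
  have hNM' : (N:ℝ) < (M:ℝ) := by exact_mod_cast hNM
  have hMpos : (0:ℝ) < M := lt_trans hNpos hNM'
  have hlogN : 0 < Real.log N := Real.log_pos hN1
  have hfNpos : 0 < f N := (hf N).lt_of_ne' hfN
  have hfMpos : 0 < f M := (hf M).lt_of_ne' hfM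
  set α : ℝ := Real.log M / Real.log N with hα_def
  have hα : 1 < α := (one_lt_div hlogN).2 (Real.log_lt_log hNpos hNM')
  have hαN : α * Real.log N = Real.log M := div_mul_cancel₀ _ hlogN.ne'
  set g : ℝ → ℕ → ℝ := fun s m => f (m + 1) / ((m + 1 : ℕ) : ℝ) ^ s with hg_def
  have hm1pos : ∀ m : ℕ, (0:ℝ) < ((m+1 : ℕ):ℝ) := by
    intro m; exact_mod_cast m.succ_pos
  have hgnn : ∀ s m, 0 ≤ g s m := fun s m =>
    div_nonneg (hf _) (le_of_lt (rpow_pos_of_pos (hm1pos m) s))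
  have hge : ∀ m : ℕ, f (m+1) ≠ 0 → (N:ℝ) ≤ ((m+1:ℕ):ℝ) := by
    intro m hm
    by_contra hc
    push_neg at hc
    exact hm (hminN (m+1) m.succ_pos (by exact_mod_cast hc))
  set h : ℝ → ℕ → ℝ := fun s m => if M ≤ m + 1 then g s m else 0 with hh_def
  have hhnn : ∀ s m, 0 ≤ h s m := by
    intro s m; simp only [hh_def]; split
    · exact hgnn s m
    · exact le_rfl
  have hhle : ∀ s m, h s m ≤ g s m := by
    intro s m; simp only [hh_def]; split
    · exact le_rfl
    · exact hgnn s m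
  -- pointwise inequalities
  have key1 : ∀ s : ℝ, ∀ m : ℕ, g (s+1) m ≤ g s m / N := by
    intro s m
    by_cases hm : f (m+1) = 0
    · simp [hg_def, hm]
    · have hNm := hge m hm
      have hp := hm1pos m
      have h1 : g (s+1) m = f (m+1) / (((m+1:ℕ):ℝ) ^ s * ((m+1:ℕ):ℝ)) := by
        simp only [hg_def]
        rw [rpow_add_one (ne_of_gt hp)]
      have h2 : g s m / (N:ℝ) = f (m+1) / (((m+1:ℕ):ℝ) ^ s * (N:ℝ)) := by
        simp only [hg_def]; rw [div_div]
      rw [h1, h2]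
      gcongr
      all_goals first | exact hf _ | exact hNm | positivity
  have key2 : ∀ s : ℝ, ∀ m : ℕ, g s m / N - h s m / N ≤ g (s+1) m := by
    intro s m
    by_cases hMm : M ≤ m + 1
    · simp only [hh_def, if_pos hMm, sub_self]
      exact hgnn (s+1) m
    · simp only [hh_def, if_neg hMm, zero_div, sub_zero]
      by_cases hm : f (m+1) = 0
      · simp [hg_def, hm]
      · have hNm := hge m hm
        have hmN : m + 1 = N := by
          have h1 : N ≤ m + 1 := by exact_mod_cast hNm
          rcases lt_or_eq_of_le h1 with h2 | h2
          · exact absurd (hminM (m+1) h2 (by omega)) hm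
          · omega
        have he : g (s+1) m = g s m / N := by
          simp only [hg_def]
          rw [rpow_add_one (ne_of_gt (hm1pos m)), ← div_div, hmN]
        rw [he]
  have key3 : ∀ s : ℝ, s₀ ≤ s → ∀ m : ℕ, h s m ≤ h s₀ m * (M:ℝ) ^ (s₀ - s) := by
    intro s hs m
    by_cases hMm : M ≤ m + 1
    · simp only [hh_def, if_pos hMm, hg_def]
      have hp := hm1pos m
      have hMm' : (M:ℝ) ≤ ((m+1:ℕ):ℝ) := by exact_mod_cast hMm
      have e1 : ((m+1:ℕ):ℝ) ^ s = ((m+1:ℕ):ℝ) ^ s₀ * ((m+1:ℕ):ℝ) ^ (s - s₀) := by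
        rw [← rpow_add hp]; ring_nf
      rw [e1]
      have e2 : f (m+1) / (((m+1:ℕ):ℝ) ^ s₀ * ((m+1:ℕ):ℝ) ^ (s - s₀)) ≤
          f (m+1) / (((m+1:ℕ):ℝ) ^ s₀ * (M:ℝ) ^ (s - s₀)) := by
        have hMle : (M:ℝ) ^ (s - s₀) ≤ ((m+1:ℕ):ℝ) ^ (s - s₀) :=
          rpow_le_rpow (le_of_lt hMpos) hMm' (sub_nonneg.2 hs)
        gcongr
        all_goals first | exact hf _ | exact hMle | positivity
      refine e2.trans (le_of_eq ?_)
      rw [← div_div, div_eq_mul_inv (f (m+1) / _), ← Real.rpow_neg hMpos.le, neg_sub]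
    · simp only [hh_def, if_neg hMm]
      positivity
  -- rpow identity
  have hpow : ∀ s : ℝ, (N:ℝ) ^ ((α - 1) * s) = (M:ℝ) ^ s / (N:ℝ) ^ s := by
    intro s
    rw [rpow_def_of_pos hNpos, rpow_def_of_pos hMpos, rpow_def_of_pos hNpos, ← Real.exp_sub]
    congr 1
    linear_combination s * hαN
  -- tail at s₀
  have Sh₀ : Summable (h s₀) := Summable.of_nonneg_of_le (hhnn s₀) (hhle s₀) (hconv s₀ le_rfl)
  set C : ℝ := ∑' m, h s₀ m with hC_def
  have hCpos : 0 < C := by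
    have hMM : M - 1 + 1 = M := by omega
    have h1 : h s₀ (M-1) ≤ C := Sh₀.le_tsum (M-1) (fun j _ => hhnn s₀ j)
    refine lt_of_lt_of_le ?_ h1
    simp only [hh_def, hg_def, hMM, if_pos (le_refl M)]
    exact div_pos hfMpos (rpow_pos_of_pos hMpos _)
  set c₂ : ℝ := C * (M:ℝ) ^ s₀ / ((N:ℝ) * f N) with hc₂_def
  have hc₂pos : 0 < c₂ :=
    div_pos (mul_pos hCpos (rpow_pos_of_pos hMpos _)) (mul_pos hNpos hfNpos)
  refine ⟨c₂, hc₂pos, max s₀ ((Real.log (c₂ * N) + 1) / ((α - 1) * Real.log N)), le_max_left _ _, ?_⟩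
  intro s hs
  have hss₀ : s₀ ≤ s := le_trans (le_max_left _ _) hs
  have hss₀' : s₀ ≤ s + 1 := by linarith
  have Sg : Summable (g s) := hconv s hss₀
  have Sg1 : Summable (g (s+1)) := hconv (s+1) hss₀'
  have Sh : Summable (h s) := Summable.of_nonneg_of_le (hhnn s) (hhle s) Sg
  have hNspos : (0:ℝ) < (N:ℝ) ^ s := rpow_pos_of_pos hNpos s
  have hMspos : (0:ℝ) < (M:ℝ) ^ s := rpow_pos_of_pos hMpos s
  have hFs : F s = ∑' m, g s m := hF s
  have hFs1 : F (s+1) = ∑' m, g (s+1) m := hF (s+1)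
  -- F s positive and lower-bounded
  have hNn : N - 1 + 1 = N := by omega
  have hFge : f N / (N:ℝ) ^ s ≤ F s := by
    rw [hFs]
    have h1 : g s (N-1) ≤ ∑' m, g s m := Sg.le_tsum (N-1) (fun j _ => hgnn s j)
    refine le_trans (le_of_eq ?_) h1
    simp only [hg_def, hNn]
  have hFpos : 0 < F s := lt_of_lt_of_le (div_pos hfNpos hNspos) hFge
  -- positivity of the lower bound expression
  have hexp : c₂ * N < (N:ℝ) ^ ((α - 1) * s) := by
    have ht : (Real.log (c₂ * N) + 1) / ((α - 1) * Real.log N) ≤ s :=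
      le_trans (le_max_right _ _) hs
    have hden : 0 < (α - 1) * Real.log N := mul_pos (by linarith) hlogN
    have h1 : Real.log (c₂ * N) + 1 ≤ s * ((α - 1) * Real.log N) := (div_le_iff₀ hden).1 ht
    rw [rpow_def_of_pos hNpos]
    calc c₂ * N = Real.exp (Real.log (c₂ * N)) := (Real.exp_log (by positivity)).symm
      _ < Real.exp (Real.log (c₂ * N) + 1) := Real.exp_lt_exp.2 (lt_add_one _)
      _ ≤ Real.exp (Real.log N * ((α - 1) * s)) := by
          refine Real.exp_le_exp.2 ?_
          calc Real.log (c₂ * N) + 1 ≤ s * ((α - 1) * Real.log N) := h1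
            _ = Real.log N * ((α - 1) * s) := by ring
  have hXlt : c₂ / (N:ℝ) ^ ((α - 1) * s) < 1 / N := by
    have h1 : c₂ / (N:ℝ) ^ ((α - 1) * s) < c₂ / (c₂ * N) :=
      div_lt_div_of_pos_left hc₂pos (by positivity) hexp
    have h2 : c₂ / (c₂ * N) = 1 / N := by field_simp
    rw [h2] at h1; exact h1
  have hposlb : 0 < 1 / (N:ℝ) - c₂ / (N:ℝ) ^ ((α - 1) * s) := sub_pos.2 hXlt
  -- upper bound: F(s+1) < F s / N
  have hub : F (s+1) < F s / N := by
    have hsub : ∀ m, 0 ≤ g s m / N - g (s+1) m := fun m => sub_nonneg.2 (key1 s m)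
    have S2 : Summable (fun m => g s m / N - g (s+1) m) := (Sg.div_const N).sub Sg1
    have h1 : g s (M-1) / N - g (s+1) (M-1) ≤ ∑' m, (g s m / N - g (s+1) m) :=
      S2.le_tsum (M-1) (fun j _ => hsub j)
    have h2 : ∑' m, (g s m / N - g (s+1) m) = F s / N - F (s+1) := by
      rw [Summable.tsum_sub (Sg.div_const N) Sg1, tsum_div_const, hFs, hFs1]
    have hMM : M - 1 + 1 = M := by omega
    have h3 : 0 < g s (M-1) / N - g (s+1) (M-1) := by
      simp only [hg_def, hMM]
      rw [rpow_add_one (ne_of_gt hMpos), div_div]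
      refine sub_pos.2 ?_
      refine div_lt_div_of_pos_left hfMpos (by positivity) ?_
      exact (mul_lt_mul_iff_right₀ (rpow_pos_of_pos hMpos s)).2 hNM'
    rw [h2] at h1
    linarith [lt_of_lt_of_le h3 h1]
  have hub' : F (s+1) / F s < 1 / N := by
    have := div_lt_div_of_pos_right hub hFpos
    rwa [div_div, mul_comm, ← div_div, div_self (ne_of_gt hFpos)] at this
  -- lower bound
  have hT : ∑' m, h s m ≤ C * (M:ℝ) ^ (s₀ - s) := by
    have h1 : ∑' m, h s m ≤ ∑' m, h s₀ m * (M:ℝ) ^ (s₀ - s) :=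
      Summable.tsum_le_tsum (key3 s hss₀) Sh (Sh₀.mul_right _)
    rwa [tsum_mul_right] at h1
  have hTnn : 0 ≤ ∑' m, h s m := tsum_nonneg (hhnn s)
  have hlb : F s / N - (∑' m, h s m) / N ≤ F (s+1) := by
    have h1 : ∑' m, (g s m / N - h s m / N) ≤ ∑' m, g (s+1) m :=
      Summable.tsum_le_tsum (key2 s) ((Sg.div_const N).sub (Sh.div_const N)) Sg1
    rwa [Summable.tsum_sub (Sg.div_const N) (Sh.div_const N), tsum_div_const, tsum_div_const,
      ← hFs, ← hFs1] at h1
  have hkey : (∑' m, h s m) / N ≤ (c₂ / (N:ℝ) ^ ((α - 1) * s)) * F s := by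
    have hXval : c₂ / (N:ℝ) ^ ((α - 1) * s) = c₂ * (N:ℝ) ^ s / (M:ℝ) ^ s := by
      rw [hpow s, div_div_eq_mul_div]
    rw [hXval]
    have hne1 : (N:ℝ) ≠ 0 := hNpos.ne'
    have hne2 : f N ≠ 0 := hfNpos.ne'
    have hne3 : (N:ℝ) ^ s ≠ 0 := hNspos.ne'
    have hne4 : (M:ℝ) ^ s ≠ 0 := hMspos.ne'
    have h2 : C * (M:ℝ) ^ (s₀ - s) / N ≤ c₂ * (N:ℝ) ^ s / (M:ℝ) ^ s * (f N / (N:ℝ) ^ s) := by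
      refine le_of_eq ?_
      rw [hc₂_def, Real.rpow_sub hMpos]
      field_simp
    calc (∑' m, h s m) / N ≤ C * (M:ℝ) ^ (s₀ - s) / N := by gcongr
      _ ≤ c₂ * (N:ℝ) ^ s / (M:ℝ) ^ s * (f N / (N:ℝ) ^ s) := h2
      _ ≤ c₂ * (N:ℝ) ^ s / (M:ℝ) ^ s * F s := by gcongr
  have hlb' : 1 / (N:ℝ) - c₂ / (N:ℝ) ^ ((α - 1) * s) ≤ F (s+1) / F s := by
    rw [le_div_iff₀ hFpos, sub_mul]
    have e1 : 1 / (N:ℝ) * F s = F s / N := by ring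
    rw [e1]
    linarith [hkey, hlb]
  exact ⟨hposlb, hlb', hub'⟩
end

section
/- Let F(s) = Σ_{n≥1} f(n) n^{-s} be a nondegenerate ordinary Dirichlet series with f(n) ≥ 0, convergent for Re(s) ≥ s₀. Then H_n^{(r)}[F] > 0 for all n ≥ 1 and r ≥ s₀ − 2, and there exists c > 0 such that log H_n^{(r)}[F] < −c n² for all sufficiently large integers n and r. -/
namespace HankelAux

open Finset Polynomial Matrix

noncomputable def xv (m : ℕ) : ℝ := (((m + 1 : ℕ) : ℝ))⁻¹

lemma xv_pos (m : ℕ) : 0 < xv m := by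
  unfold xv; positivity

lemma xv_ne (m : ℕ) : xv m ≠ 0 := (xv_pos m).ne'

lemma xv_le_one (m : ℕ) : xv m ≤ 1 := by
  unfold xv
  rw [inv_le_one_iff₀]
  right; exact_mod_cast Nat.succ_le_succ (Nat.zero_le m)

lemma xv_mono {l m : ℕ} (h : l ≤ m) : xv m ≤ xv l := by
  unfold xv
  apply inv_anti₀
  · positivity
  · exact_mod_cast Nat.succ_le_succ h

lemma xv_inj : Function.Injective xv := by
  intro a b hab
  unfold xv at hab
  have : ((a + 1 : ℕ) : ℝ) = ((b + 1 : ℕ) : ℝ) := by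
    have ha : ((a + 1 : ℕ) : ℝ) ≠ 0 := by positivity
    have hb : ((b + 1 : ℕ) : ℝ) ≠ 0 := by positivity
    exact inv_injective hab
  exact_mod_cast Nat.succ_injective (by exact_mod_cast this)

noncomputable def wv (f : ℕ → ℝ) (r : ℤ) (m : ℕ) : ℝ := f (m + 1) * xv m ^ (2 + r)

lemma wv_nonneg {f : ℕ → ℝ} (hf : ∀ n, 0 ≤ f n) (r : ℤ) (m : ℕ) : 0 ≤ wv f r m :=
  mul_nonneg (hf _) (zpow_pos (xv_pos m) _).le

lemma term_eq (f : ℕ → ℝ) (k : ℤ) (m : ℕ) :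
    f (m + 1) / ((m + 1 : ℕ) : ℝ) ^ k = f (m + 1) * xv m ^ k := by
  rw [div_eq_mul_inv, ← _root_.inv_zpow]; rfl

lemma summable_zpow {f : ℕ → ℝ} {s₀ : ℝ}
    (hconv : ∀ s : ℝ, s₀ ≤ s → Summable (fun m : ℕ => f (m + 1) / ((m + 1 : ℕ) : ℝ) ^ s))
    {k : ℤ} (hk : s₀ ≤ (k : ℝ)) :
    Summable fun m => f (m + 1) * xv m ^ k := by
  have h := hconv (k : ℝ) hk
  refine h.congr fun m => ?_
  rw [Real.rpow_intCast, term_eq]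

lemma term_split (f : ℕ → ℝ) (r : ℤ) (i j m : ℕ) :
    f (m + 1) * xv m ^ ((i : ℤ) + (j : ℤ) + 2 + r) = wv f r m * (xv m ^ i * xv m ^ j) := by
  unfold wv
  rw [show (i : ℤ) + (j : ℤ) + 2 + r = (2 + r) + (i : ℤ) + (j : ℤ) by ring,
    zpow_add₀ (xv_ne m), zpow_add₀ (xv_ne m), zpow_natCast, zpow_natCast]
  ring

lemma summable_entry {f : ℕ → ℝ} {s₀ : ℝ}
    (hconv : ∀ s : ℝ, s₀ ≤ s → Summable (fun m : ℕ => f (m + 1) / ((m + 1 : ℕ) : ℝ) ^ s))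
    {r : ℤ} (hr : s₀ - 2 ≤ (r : ℝ)) (i j : ℕ) :
    Summable fun m => wv f r m * (xv m ^ i * xv m ^ j) := by
  have hk : s₀ ≤ (((i : ℤ) + (j : ℤ) + 2 + r : ℤ) : ℝ) := by
    push_cast
    have hi : (0:ℝ) ≤ (i:ℝ) := Nat.cast_nonneg i
    have hj : (0:ℝ) ≤ (j:ℝ) := Nat.cast_nonneg j
    linarith
  exact (summable_zpow hconv hk).congr fun m => term_split f r i j m

lemma hankel_eq (f : ℕ → ℝ) (F : ℤ → ℝ)
    (hF : ∀ k : ℤ, F k = ∑' m : ℕ, f (m + 1) / (((m + 1 : ℕ) : ℝ)) ^ (k : ℤ))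
    (n : ℕ) (r : ℤ) :
    hankelZ F n r = Matrix.det (Matrix.of fun i j : Fin n =>
      ∑' m, wv f r m * (xv m ^ (i : ℕ) * xv m ^ (j : ℕ))) := by
  unfold hankelZ
  congr 1
  ext i j
  simp only [Matrix.of_apply]
  rw [hF]
  exact tsum_congr fun m => by rw [term_eq, term_split]

lemma posdef_gram {f : ℕ → ℝ} {s₀ : ℝ} (hf : ∀ n, 0 ≤ f n)
    (hconv : ∀ s : ℝ, s₀ ≤ s → Summable (fun m : ℕ => f (m + 1) / ((m + 1 : ℕ) : ℝ) ^ s))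
    (hinf : {n : ℕ | f n ≠ 0}.Infinite)
    {r : ℤ} (hr : s₀ - 2 ≤ (r : ℝ)) (n : ℕ) :
    (Matrix.of fun i j : Fin n =>
      ∑' m, wv f r m * (xv m ^ (i : ℕ) * xv m ^ (j : ℕ))).PosDef := by
  set M := (Matrix.of fun i j : Fin n =>
      ∑' m, wv f r m * (xv m ^ (i : ℕ) * xv m ^ (j : ℕ))) with hM
  rw [Matrix.posDef_iff_dotProduct_mulVec]
  constructor
  · ext i j
    simp only [Matrix.conjTranspose_apply, hM, Matrix.of_apply, star_trivial]
    exact tsum_congr fun m => by ring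
  · intro c hc
    set S : ℕ → ℝ := fun m => ∑ i : Fin n, c i * xv m ^ (i : ℕ) with hS
    have hsum1 : ∀ i j : Fin n,
        Summable fun m => (wv f r m * (xv m ^ (i : ℕ) * xv m ^ (j : ℕ))) * c j :=
      fun i j => (summable_entry hconv hr i j).mul_right _
    have hsum2 : ∀ i : Fin n,
        Summable fun m => ∑ j : Fin n, (wv f r m * (xv m ^ (i : ℕ) * xv m ^ (j : ℕ))) * c j :=
      fun i => summable_sum fun j _ => hsum1 i j
    have key : dotProduct (star c) (M.mulVec c) = ∑' m, wv f r m * (S m) ^ 2 := by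
      have h1 : ∀ i : Fin n, (M.mulVec c) i
          = ∑' m, ∑ j : Fin n, (wv f r m * (xv m ^ (i : ℕ) * xv m ^ (j : ℕ))) * c j := by
        intro i
        show ∑ j : Fin n, M i j * c j = _
        calc ∑ j : Fin n, M i j * c j
            = ∑ j : Fin n, ∑' m, (wv f r m * (xv m ^ (i : ℕ) * xv m ^ (j : ℕ))) * c j :=
              Finset.sum_congr rfl fun j _ => by
                simp only [hM, Matrix.of_apply]; exact tsum_mul_right.symm
          _ = _ := (Summable.tsum_finsetSum fun j _ => hsum1 i j).symm
      calc dotProduct (star c) (M.mulVec c) = ∑ i : Fin n, c i * (M.mulVec c) i := by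
            simp [dotProduct]
        _ = ∑ i : Fin n, ∑' m, c i * ∑ j : Fin n,
              (wv f r m * (xv m ^ (i : ℕ) * xv m ^ (j : ℕ))) * c j :=
            Finset.sum_congr rfl fun i _ => by rw [h1 i, tsum_mul_left]
        _ = ∑' m, ∑ i : Fin n, c i * ∑ j : Fin n,
              (wv f r m * (xv m ^ (i : ℕ) * xv m ^ (j : ℕ))) * c j :=
            (Summable.tsum_finsetSum fun i _ => (hsum2 i).mul_left _).symm
        _ = ∑' m, wv f r m * (S m) ^ 2 := by
            refine tsum_congr fun m => ?_
            rw [hS, sq, Finset.sum_mul_sum]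
            simp only [Finset.mul_sum]
            exact Finset.sum_congr rfl fun i _ => Finset.sum_congr rfl fun j _ => by ring
    rw [key]
    have hsumS : Summable fun m => wv f r m * (S m) ^ 2 := by
      refine (summable_sum (s := Finset.univ)
        (fun i (_ : i ∈ Finset.univ) => (hsum2 i).mul_left (c i))).congr fun m => ?_
      rw [hS, sq, Finset.sum_mul_sum]
      simp only [Finset.mul_sum]
      exact (Finset.sum_congr rfl fun i _ => Finset.sum_congr rfl fun j _ => by ring).symm
    have hnn : ∀ m, 0 ≤ wv f r m * (S m) ^ 2 :=
      fun m => mul_nonneg (wv_nonneg hf r m) (sq_nonneg _)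
    -- find a positive term
    obtain ⟨i₀, hi₀⟩ : ∃ i, c i ≠ 0 := Function.ne_iff.mp hc
    set P : ℝ[X] := ∑ i : Fin n, C (c i) * X ^ (i : ℕ) with hP
    have hPcoeff : P.coeff (i₀ : ℕ) = c i₀ := by
      rw [hP, finset_sum_coeff]
      rw [Finset.sum_eq_single i₀]
      · simp
      · intro j _ hj
        have : (i₀ : ℕ) ≠ (j : ℕ) := fun h => hj (Fin.val_injective h).symm
        simp [coeff_C_mul, coeff_X_pow, this]
      · simp
    have hPne : P ≠ 0 := fun h => hi₀ (by rw [← hPcoeff, h, coeff_zero])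
    have hPeval : ∀ x : ℝ, P.eval x = ∑ i : Fin n, c i * x ^ (i : ℕ) := by
      intro x; rw [hP, eval_finset_sum]; simp
    have hbad : {m : ℕ | P.eval (xv m) = 0}.Finite := by
      have : {m : ℕ | P.eval (xv m) = 0} = xv ⁻¹' {x | P.IsRoot x} := rfl
      rw [this]
      exact Set.Finite.preimage (xv_inj.injOn) (finite_setOf_isRoot hPne)
    have hgood : {m : ℕ | f (m + 1) ≠ 0}.Infinite := by
      have h0 : ({n : ℕ | f n ≠ 0} \ {0}).Infinite := hinf.diff (Set.finite_singleton 0)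
      have hsub : ({n : ℕ | f n ≠ 0} \ {0}) ⊆ Set.range (fun m : ℕ => m + 1) := by
        rintro x ⟨hx, hx0⟩
        simp only [Set.mem_singleton_iff] at hx0
        exact ⟨x - 1, show x - 1 + 1 = x by omega⟩
      exact (h0.preimage hsub).mono fun m hm => hm.1
    obtain ⟨m₀, hm₀⟩ := (hgood.diff hbad).nonempty
    have hfm : f (m₀ + 1) ≠ 0 := hm₀.1
    have hSne : S m₀ ≠ 0 := by
      have : P.eval (xv m₀) ≠ 0 := hm₀.2
      rw [hPeval] at this
      exact this
    have hwpos : 0 < wv f r m₀ :=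
      mul_pos ((hf _).lt_of_ne (Ne.symm hfm)) (zpow_pos (xv_pos m₀) _)
    exact Summable.tsum_pos hsumS hnn m₀ (mul_pos hwpos (sq_pos_of_ne_zero hSne))


lemma summable_wv {f : ℕ → ℝ} {s₀ : ℝ}
    (hconv : ∀ s : ℝ, s₀ ≤ s → Summable (fun m : ℕ => f (m + 1) / ((m + 1 : ℕ) : ℝ) ^ s))
    {r : ℤ} (hr : s₀ - 2 ≤ (r : ℝ)) : Summable (wv f r) := by
  have hk : s₀ ≤ ((2 + r : ℤ) : ℝ) := by push_cast; linarith
  exact summable_zpow hconv hk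

/-- the factor polynomials -/
noncomputable def qp (j : ℕ) : ℝ[X] := ∏ l ∈ range j, (X - C (xv l))

lemma qp_monic (j : ℕ) : (qp j).Monic :=
  monic_prod_of_monic _ _ fun l _ => monic_X_sub_C _

lemma qp_natDegree (j : ℕ) : (qp j).natDegree = j := by
  rw [qp, natDegree_prod _ _ (fun l _ => X_sub_C_ne_zero _)]
  simp

lemma qp_eval_abs_le (j m : ℕ) : |(qp j).eval (xv m)| ≤ 1 / (j.factorial : ℝ) := by
  rcases lt_or_ge m j with hmj | hjm
  · have h0 : (qp j).eval (xv m) = 0 := by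
      rw [qp, eval_prod]
      exact Finset.prod_eq_zero (Finset.mem_range.mpr hmj) (by simp)
    rw [h0, abs_zero]
    positivity
  · rw [qp, eval_prod, Finset.abs_prod]
    have h1 : ∀ l ∈ range j, |Polynomial.eval (xv m) (X - C (xv l))| ≤ ((l + 1 : ℕ) : ℝ)⁻¹ := by
      intro l hl
      have hlm : l ≤ m := le_trans (le_of_lt (mem_range.mp hl)) hjm
      rw [eval_sub, eval_X, eval_C, abs_sub_comm,
        abs_of_nonneg (sub_nonneg.mpr (xv_mono hlm))]
      have h2 := (xv_pos m).le
      have : xv l - xv m ≤ xv l := by linarith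
      exact this.trans_eq rfl
    calc ∏ l ∈ range j, |Polynomial.eval (xv m) (X - C (xv l))|
        ≤ ∏ l ∈ range j, ((l + 1 : ℕ) : ℝ)⁻¹ :=
          Finset.prod_le_prod (fun _ _ => abs_nonneg _) h1
      _ = 1 / (j.factorial : ℝ) := by
          have hcast : ((j.factorial : ℕ) : ℝ) = ∏ l ∈ range j, ((l + 1 : ℕ) : ℝ) := by
            rw [← Nat.cast_prod]
            congr 1
            exact (Finset.prod_range_add_one_eq_factorial j).symm
          rw [one_div, hcast]
          exact Finset.prod_inv_distrib _
/-- general Leibniz bound -/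
lemma det_abs_le {n : ℕ} (A : Matrix (Fin n) (Fin n) ℝ) (B : Fin n → ℝ)
    (hB : ∀ i j, |A i j| ≤ B j) :
    |A.det| ≤ (n.factorial : ℝ) * ∏ j, B j := by
  rw [Matrix.det_apply]
  calc |∑ σ : Equiv.Perm (Fin n), Equiv.Perm.sign σ • ∏ i, A (σ i) i|
      ≤ ∑ σ : Equiv.Perm (Fin n), |Equiv.Perm.sign σ • ∏ i, A (σ i) i| :=
        abs_sum_le_sum_abs _ _
    _ ≤ ∑ _σ : Equiv.Perm (Fin n), ∏ j, B j := by
        refine Finset.sum_le_sum fun σ _ => ?_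
        have habs : |Equiv.Perm.sign σ • ∏ i, A (σ i) i| = |∏ i, A (σ i) i| := by
          rcases Int.units_eq_one_or (Equiv.Perm.sign σ) with h | h <;>
            simp [h]
        rw [habs, Finset.abs_prod]
        exact Finset.prod_le_prod (fun i _ => abs_nonneg _) (fun i _ => hB (σ i) i)
    _ = (n.factorial : ℝ) * ∏ j, B j := by
        rw [Finset.sum_const, Finset.card_univ, Fintype.card_perm, Fintype.card_fin,
          nsmul_eq_mul]

lemma det_bound {f : ℕ → ℝ} {s₀ : ℝ} (hf : ∀ n, 0 ≤ f n)
    (hconv : ∀ s : ℝ, s₀ ≤ s → Summable (fun m : ℕ => f (m + 1) / ((m + 1 : ℕ) : ℝ) ^ s))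
    {r : ℤ} (hr : s₀ - 2 ≤ (r : ℝ)) (n : ℕ) :
    (Matrix.of fun i j : Fin n =>
      ∑' m, wv f r m * (xv m ^ (i : ℕ) * xv m ^ (j : ℕ))).det
      ≤ (n.factorial : ℝ) * ∏ j : Fin n,
          ((∑' m, wv f r m) * (1 / (((j : ℕ).factorial : ℕ) : ℝ))) := by
  set M := (Matrix.of fun i j : Fin n =>
      ∑' m, wv f r m * (xv m ^ (i : ℕ) * xv m ^ (j : ℕ))) with hM
  set U : Matrix (Fin n) (Fin n) ℝ := Matrix.of fun t j : Fin n => (qp (j : ℕ)).coeff (t : ℕ)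
    with hU
  have hUtri : U.BlockTriangular id := by
    intro t j hjt
    simp only [hU, Matrix.of_apply]
    apply coeff_eq_zero_of_natDegree_lt
    rw [qp_natDegree]
    exact_mod_cast hjt
  have hUdet : U.det = 1 := by
    rw [Matrix.det_of_upperTriangular hUtri]
    refine Finset.prod_eq_one fun j _ => ?_
    simp only [hU, Matrix.of_apply]
    have := (qp_monic (j : ℕ)).coeff_natDegree
    rwa [qp_natDegree] at this
  -- summability of the "entry with eval" function
  have hsumg : ∀ (i j : Fin n),
      Summable fun m => wv f r m * xv m ^ (i : ℕ) * (qp (j : ℕ)).eval (xv m) := by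
    intro i j
    refine (summable_sum (s := (Finset.univ : Finset (Fin n)))
      (f := fun (t : Fin n) (m : ℕ) => (wv f r m * (xv m ^ (i : ℕ) * xv m ^ (t : ℕ))) * (qp (j : ℕ)).coeff (t : ℕ))
      (fun t _ => (summable_entry hconv hr (i : ℕ) (t : ℕ)).mul_right _)).congr fun m => ?_
    rw [eval_eq_sum_range' (lt_of_le_of_lt (le_of_eq (qp_natDegree (j : ℕ))) j.isLt),
      ← Fin.sum_univ_eq_sum_range, Finset.mul_sum]
    exact Finset.sum_congr rfl fun t _ => by ring
  have hMU : ∀ i j : Fin n, (M * U) i j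
      = ∑' m, wv f r m * xv m ^ (i : ℕ) * (qp (j : ℕ)).eval (xv m) := by
    intro i j
    rw [Matrix.mul_apply]
    calc ∑ t : Fin n, M i t * U t j
        = ∑ t : Fin n, ∑' m, (wv f r m * (xv m ^ (i : ℕ) * xv m ^ (t : ℕ)))
            * (qp (j : ℕ)).coeff (t : ℕ) :=
          Finset.sum_congr rfl fun t _ => by
            simp only [hM, hU, Matrix.of_apply]; exact tsum_mul_right.symm
      _ = ∑' m, ∑ t : Fin n, (wv f r m * (xv m ^ (i : ℕ) * xv m ^ (t : ℕ)))
            * (qp (j : ℕ)).coeff (t : ℕ) :=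
          (Summable.tsum_finsetSum (s := (Finset.univ : Finset (Fin n)))
            (f := fun (t : Fin n) (m : ℕ) => (wv f r m * (xv m ^ (i : ℕ) * xv m ^ (t : ℕ)))
              * (qp (j : ℕ)).coeff (t : ℕ))
            fun t _ => (summable_entry hconv hr (i : ℕ) (t : ℕ)).mul_right _).symm
      _ = ∑' m, wv f r m * xv m ^ (i : ℕ) * (qp (j : ℕ)).eval (xv m) := by
          refine tsum_congr fun m => ?_
          rw [eval_eq_sum_range' (lt_of_le_of_lt (le_of_eq (qp_natDegree (j : ℕ))) j.isLt),
            ← Fin.sum_univ_eq_sum_range, Finset.mul_sum]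
          exact Finset.sum_congr rfl fun t _ => by ring
  have hentry : ∀ i j : Fin n,
      |(M * U) i j| ≤ (∑' m, wv f r m) * (1 / (((j : ℕ).factorial : ℕ) : ℝ)) := by
    intro i j
    rw [hMU i j]
    have habs : |∑' m, wv f r m * xv m ^ (i : ℕ) * (qp (j : ℕ)).eval (xv m)|
        ≤ ∑' m, |wv f r m * xv m ^ (i : ℕ) * (qp (j : ℕ)).eval (xv m)| := by
      have h := norm_tsum_le_tsum_norm
        (f := fun m => wv f r m * xv m ^ (i : ℕ) * (qp (j : ℕ)).eval (xv m))
        ((hsumg i j).abs.congr (fun m => (Real.norm_eq_abs _).symm))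
      simp only [Real.norm_eq_abs] at h
      exact h
    refine habs.trans ?_
    have hle : ∀ m, |wv f r m * xv m ^ (i : ℕ) * (qp (j : ℕ)).eval (xv m)|
        ≤ wv f r m * (1 / (((j : ℕ).factorial : ℕ) : ℝ)) := by
      intro m
      rw [abs_mul, abs_mul, abs_of_nonneg (wv_nonneg hf r m),
        abs_of_nonneg (pow_nonneg (xv_pos m).le _), mul_assoc]
      refine mul_le_mul_of_nonneg_left ?_ (wv_nonneg hf r m)
      calc xv m ^ (i : ℕ) * |(qp (j : ℕ)).eval (xv m)|
          ≤ 1 * (1 / (((j : ℕ).factorial : ℕ) : ℝ)) := by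
            refine mul_le_mul (pow_le_one₀ (xv_pos m).le (xv_le_one m))
              (qp_eval_abs_le _ _) (abs_nonneg _) zero_le_one
        _ = 1 / (((j : ℕ).factorial : ℕ) : ℝ) := one_mul _
    calc (∑' m, |wv f r m * xv m ^ (i : ℕ) * (qp (j : ℕ)).eval (xv m)|)
        ≤ ∑' m, wv f r m * (1 / (((j : ℕ).factorial : ℕ) : ℝ)) :=
          Summable.tsum_le_tsum hle ((hsumg i j).abs) ((summable_wv hconv hr).mul_right _)
      _ = (∑' m, wv f r m) * (1 / (((j : ℕ).factorial : ℕ) : ℝ)) := tsum_mul_right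
  have hdet : M.det = (M * U).det := by rw [Matrix.det_mul, hUdet, mul_one]
  calc M.det ≤ |M.det| := le_abs_self _
    _ = |(M * U).det| := by rw [hdet]
    _ ≤ (n.factorial : ℝ) * ∏ j : Fin n,
          ((∑' m, wv f r m) * (1 / (((j : ℕ).factorial : ℕ) : ℝ))) :=
      det_abs_le (M * U) _ hentry

lemma sum_range_cast (m : ℕ) : ∑ j ∈ range m, (j : ℝ) = (m : ℝ) * ((m : ℝ) - 1) / 2 := by
  induction m with
  | zero => simp
  | succ k ih =>
    rw [Finset.sum_range_succ, ih]
    push_cast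
    ring

lemma two_pow_le_factorial : ∀ j : ℕ, 2 ^ (j - 1) ≤ j.factorial := by
  intro j
  induction j with
  | zero => decide
  | succ k ih =>
    cases k with
    | zero => decide
    | succ l =>
      have h2 : 2 ≤ l + 2 := by omega
      calc 2 ^ (l + 2 - 1) = 2 * 2 ^ (l + 1 - 1) := by
            have : l + 2 - 1 = (l + 1 - 1) + 1 := by omega
            rw [this, pow_succ]
            ring
        _ ≤ (l + 2) * (l + 1).factorial := Nat.mul_le_mul h2 ih
        _ = (l + 2).factorial := (Nat.factorial_succ (l + 1)).symm

lemma log_factorial_ge (j : ℕ) :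
    ((j : ℝ) - 1) * Real.log 2 ≤ Real.log (j.factorial : ℝ) := by
  rcases Nat.eq_zero_or_pos j with rfl | hj
  · simp [Real.log_nonneg one_le_two]
  · have h1 : (2 : ℝ) ^ (j - 1) ≤ (j.factorial : ℝ) := by
      exact_mod_cast two_pow_le_factorial j
    have h2 := Real.log_le_log (by positivity) h1
    rw [Real.log_pow] at h2
    have h3 : ((j - 1 : ℕ) : ℝ) = (j : ℝ) - 1 := by
      have : 1 ≤ j := hj
      push_cast [this]
      ring
    rw [h3] at h2
    exact h2


lemma final_ineq (L l K : ℝ) (hL : 0 ≤ L) (hl : 0 < l) (hl1 : l ≤ 1) (hK : 0 ≤ K)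
    (hx : 4 * (L + 4) ≤ l * (K + 1)) :
    K + (K + 1) * L - (K * (K - 1) / 2 - K) * l < -(l / 4) * (K + 1) ^ 2 := by
  nlinarith [mul_le_mul_of_nonneg_right hx (by linarith : (0:ℝ) ≤ K + 1),
    mul_nonneg (sub_nonneg.mpr hl1) (by linarith : (0:ℝ) ≤ K + 1)]


end HankelAux

open HankelAux in
theorem hankel_pos_and_log_decay (f : ℕ → ℝ) (s₀ : ℝ)
    (hf : ∀ n, 0 ≤ f n)
    (hconv : ∀ s : ℝ, s₀ ≤ s → Summable (fun m : ℕ => f (m + 1) / ((m + 1 : ℕ) : ℝ) ^ s))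
    (hinf : {n : ℕ | f n ≠ 0}.Infinite)
    (F : ℤ → ℝ) (hF : ∀ k : ℤ, F k = ∑' m : ℕ, f (m + 1) / (((m + 1 : ℕ) : ℝ)) ^ (k : ℤ)) :
    (∀ n ≥ 1, ∀ r : ℤ, (r : ℝ) ≥ s₀ - 2 → 0 < hankelZ F n r) ∧
      ∃ c > 0, ∃ N₀ : ℕ, ∃ R₀ : ℤ, ∀ n ≥ N₀, ∀ r ≥ R₀,
        Real.log (hankelZ F n r) < -c * (n : ℝ) ^ 2 := by
  constructor
  · intro n _hn r hr
    rw [hankel_eq f F hF n r]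
    exact (posdef_gram hf hconv hinf hr n).det_pos
  · set l := Real.log 2 with hldef
    have hl : 0 < l := Real.log_pos one_lt_two
    have hl1 : l ≤ 1 := by
      have := Real.log_le_sub_one_of_pos (show (0:ℝ) < 2 by norm_num)
      linarith
    set R₀ : ℤ := ⌈s₀⌉ with hR₀def
    have hR₀ : s₀ - 2 ≤ (R₀ : ℝ) := by
      have := Int.le_ceil s₀
      simp only [hR₀def]
      linarith
    have hW₀sum : Summable (wv f R₀) := summable_wv hconv hR₀
    set W₀ := ∑' m, wv f R₀ m with hW₀def
    have hW₀nn : 0 ≤ W₀ := tsum_nonneg fun m => wv_nonneg hf R₀ m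
    set W' := W₀ + 1 with hW'def
    have hW'1 : 1 ≤ W' := by linarith
    have hW'pos : (0:ℝ) < W' := by linarith
    set L := Real.log W' with hLdef
    have hL : 0 ≤ L := Real.log_nonneg hW'1
    obtain ⟨N₁, hN₁⟩ := exists_nat_ge (4 * (L + 4) / l)
    refine ⟨l / 4, by linarith, max N₁ 1, R₀, ?_⟩
    intro n hn r hr
    have hn1 : 1 ≤ n := le_trans (le_max_right N₁ 1) hn
    obtain ⟨k, rfl⟩ : ∃ k, n = k + 1 := ⟨n - 1, by omega⟩
    have hsr : s₀ - 2 ≤ (r : ℝ) := by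
      have h1 : (R₀ : ℝ) ≤ (r : ℝ) := by exact_mod_cast hr
      linarith
    have hdetpos : 0 < hankelZ F (k + 1) r := by
      rw [hankel_eq f F hF _ r]
      exact (posdef_gram hf hconv hinf hsr _).det_pos
    have hWsum : Summable (wv f r) := summable_wv hconv hsr
    have hWle : (∑' m, wv f r m) ≤ W' := by
      have h1 : (∑' m, wv f r m) ≤ W₀ := by
        refine Summable.tsum_le_tsum (fun m => ?_) hWsum hW₀sum
        unfold wv
        refine mul_le_mul_of_nonneg_left ?_ (hf _)
        refine zpow_le_zpow_right_of_le_one₀ (xv_pos m) (xv_le_one m) ?_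
        omega
      linarith
    have hdb := det_bound hf hconv hsr (k + 1)
    set P := ∏ j : Fin (k + 1), (W' * (1 / (((j : ℕ).factorial : ℕ) : ℝ))) with hPdef
    have hPpos : 0 < P := Finset.prod_pos fun j _ => by positivity
    have hfacne : (((k + 1).factorial : ℕ) : ℝ) ≠ 0 := by positivity
    have hprod : ((k + 1).factorial : ℝ) * ∏ j : Fin (k + 1),
        ((∑' m, wv f r m) * (1 / (((j : ℕ).factorial : ℕ) : ℝ)))
        ≤ ((k + 1).factorial : ℝ) * P := by
      refine mul_le_mul_of_nonneg_left ?_ (by positivity)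
      refine Finset.prod_le_prod (fun j _ => ?_) (fun j _ => ?_)
      · exact mul_nonneg (tsum_nonneg fun m => wv_nonneg hf r m) (by positivity)
      · exact mul_le_mul_of_nonneg_right hWle (by positivity)
    have hlog1 : Real.log (hankelZ F (k + 1) r)
        ≤ Real.log (((k + 1).factorial : ℝ) * P) := by
      apply Real.log_le_log hdetpos
      calc hankelZ F (k + 1) r = _ := hankel_eq f F hF (k + 1) r
        _ ≤ _ := hdb
        _ ≤ _ := hprod
    have hlogP : Real.log P = ((k : ℝ) + 1) * L
        - ∑ j ∈ Finset.range (k + 1), Real.log ((j.factorial : ℕ) : ℝ) := by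
      rw [hPdef, Real.log_prod (fun j _ => (by positivity : (0:ℝ) < _).ne')]
      have hterm : ∀ j : Fin (k + 1),
          Real.log (W' * (1 / (((j : ℕ).factorial : ℕ) : ℝ)))
            = L - Real.log ((((j : ℕ).factorial : ℕ)) : ℝ) := by
        intro j
        rw [Real.log_mul (by positivity) (by positivity), one_div, Real.log_inv, hLdef]
        ring
      rw [Finset.sum_congr rfl (fun j _ => hterm j), Finset.sum_sub_distrib,
        Finset.sum_const, Finset.card_univ, Fintype.card_fin, nsmul_eq_mul,
        Fin.sum_univ_eq_sum_range (fun j => Real.log ((j.factorial : ℕ) : ℝ)) (k + 1)]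
      push_cast
      ring
    have hA : Real.log (hankelZ F (k + 1) r)
        ≤ Real.log (((k + 1).factorial : ℕ) : ℝ) + (((k : ℝ) + 1) * L
          - ∑ j ∈ Finset.range (k + 1), Real.log ((j.factorial : ℕ) : ℝ)) := by
      rw [← hlogP, ← Real.log_mul hfacne hPpos.ne']
      exact hlog1
    have hfs : Real.log (((k + 1).factorial : ℕ) : ℝ)
        = Real.log ((k : ℝ) + 1) + Real.log ((k.factorial : ℕ) : ℝ) := by
      have hcast : (((k + 1).factorial : ℕ) : ℝ) = ((k : ℝ) + 1) * ((k.factorial : ℕ) : ℝ) := by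
        rw [Nat.factorial_succ]
        push_cast
        ring
      rw [hcast, Real.log_mul (by positivity) (by positivity)]
    have hss : ∑ j ∈ Finset.range (k + 1), Real.log ((j.factorial : ℕ) : ℝ)
        = ∑ j ∈ Finset.range k, Real.log ((j.factorial : ℕ) : ℝ)
          + Real.log ((k.factorial : ℕ) : ℝ) :=
      Finset.sum_range_succ _ k
    have hlogk : Real.log ((k : ℝ) + 1) ≤ (k : ℝ) := by
      have := Real.log_le_sub_one_of_pos (show (0:ℝ) < (k : ℝ) + 1 by positivity)
      linarith
    have hC : ((k : ℝ) * ((k : ℝ) - 1) / 2 - (k : ℝ)) * l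
        ≤ ∑ j ∈ Finset.range k, Real.log ((j.factorial : ℕ) : ℝ) := by
      have heq : ∑ j ∈ Finset.range k, (((j : ℝ) - 1) * l)
          = ((k : ℝ) * ((k : ℝ) - 1) / 2 - (k : ℝ)) * l := by
        rw [← Finset.sum_mul, Finset.sum_sub_distrib, sum_range_cast, Finset.sum_const,
          Finset.card_range, nsmul_eq_mul, mul_one]
      rw [← heq]
      exact Finset.sum_le_sum fun j _ => log_factorial_ge j
    have hx : 4 * (L + 4) ≤ l * ((k : ℝ) + 1) := by
      have h1 : 4 * (L + 4) / l ≤ ((k : ℝ) + 1) := by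
        have h2 : (N₁ : ℝ) ≤ ((k + 1 : ℕ) : ℝ) := by
          exact_mod_cast le_trans (le_max_left N₁ 1) hn
        push_cast at h2
        linarith
      rw [div_le_iff₀ hl] at h1
      linarith
    have hfinal := final_ineq L l (k : ℝ) hL hl hl1 (Nat.cast_nonneg k) hx
    rw [hfs, hss] at hA
    push_cast
    linarith
end

section
/- For every ε ∈ (0,1) there exists N₀ such that for all n ≥ N₀, the Hankel determinant of the Riemann zeta function at offset 0 satisfies log H_n^{(0)}[ζ] < −n² log(2 − ε). -/
/-- The values of the Riemann zeta function at integer arguments `k ≥ 2`. -/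
noncomputable def zetaVal (k : ℕ) : ℝ := ∑' m : ℕ, 1 / ((m + 1 : ℕ) : ℝ) ^ k

namespace HZaux

open Matrix

noncomputable def t (m : ℕ) : ℝ := ((m : ℝ) + 1)⁻¹

lemma t_pos (m : ℕ) : 0 < t m := by unfold t; positivity

lemma t_le_one (m : ℕ) : t m ≤ 1 := by
  unfold t
  rw [inv_le_one_iff₀]
  right; linarith [Nat.cast_nonneg (α := ℝ) m]

lemma summable_t_sq : Summable (fun m : ℕ => t m ^ 2) := by
  have h1 : Summable (fun m : ℕ => 1 / ((m : ℝ)) ^ 2) :=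
    Real.summable_one_div_nat_pow.mpr one_lt_two
  have := (summable_nat_add_iff 1).mpr h1
  refine this.congr fun m => ?_
  unfold t; push_cast; rw [one_div, inv_pow]

lemma summable_dom {f : ℕ → ℝ} (h : ∀ m, |f m| ≤ t m ^ 2) : Summable f :=
  Summable.of_abs (Summable.of_nonneg_of_le (fun m => abs_nonneg _) h summable_t_sq)

lemma zetaVal_eq (k : ℕ) : zetaVal k = ∑' m : ℕ, t m ^ k := by
  unfold zetaVal t
  congr 1; funext m
  push_cast; rw [one_div, inv_pow]

lemma summable_tpow {k : ℕ} (hk : 2 ≤ k) : Summable (fun m : ℕ => t m ^ k) :=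
  summable_dom fun m => by
    rw [abs_of_pos (pow_pos (t_pos m) k)]
    exact pow_le_pow_of_le_one (t_pos m).le (t_le_one m) hk

lemma summable_tpow_mul {k : ℕ} (hk : 2 ≤ k) :
    Summable (fun m : ℕ => t m ^ k * (1 - t m)) :=
  summable_dom fun m => by
    have h1 : 0 ≤ 1 - t m := by linarith [t_le_one m]
    have h2 : 1 - t m ≤ 1 := by linarith [t_pos m]
    rw [abs_of_nonneg (mul_nonneg (pow_nonneg (t_pos m).le k) h1)]
    calc t m ^ k * (1 - t m) ≤ t m ^ k * 1 := by
          exact mul_le_mul_of_nonneg_left h2 (pow_nonneg (t_pos m).le k)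
      _ = t m ^ k := mul_one _
      _ ≤ t m ^ 2 := pow_le_pow_of_le_one (t_pos m).le (t_le_one m) hk

noncomputable def g : ℕ → ℝ → ℝ
  | 0, x => x
  | (i + 1), x => -(x ^ (i + 1) * (1 - x))

lemma g_abs_le (i : ℕ) (m : ℕ) : |g i (t m)| ≤ t m := by
  have h0 := t_pos m
  have h1 := t_le_one m
  match i with
  | 0 => rw [g, abs_of_pos h0]
  | (i' + 1) =>
    rw [g, abs_neg, abs_of_nonneg (by nlinarith [pow_pos h0 (i' + 1)])]
    calc t m ^ (i' + 1) * (1 - t m) ≤ t m ^ (i' + 1) * 1 := by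
          nlinarith [pow_pos h0 (i' + 1)]
      _ = t m ^ (i' + 1) := mul_one _
      _ ≤ t m ^ 1 := pow_le_pow_of_le_one h0.le h1 (by omega)
      _ = t m := pow_one _

lemma summable_gg (i j : ℕ) : Summable (fun m : ℕ => g i (t m) * g j (t m)) :=
  summable_dom fun m => by
    rw [abs_mul, sq]
    exact mul_le_mul (g_abs_le i m) (g_abs_le j m) (abs_nonneg _) (t_pos m).le

noncomputable def A (n : ℕ) : Matrix (Fin n) (Fin n) ℝ :=
  Matrix.of fun i j => ∑' m : ℕ, t m ^ ((i : ℕ) + (j : ℕ) + 2)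

noncomputable def Bmat (n : ℕ) : Matrix (Fin n) (Fin n) ℝ :=
  Matrix.of fun i j => if (i : ℕ) = 0 then ∑' m : ℕ, t m ^ ((j : ℕ) + 2)
    else -∑' m : ℕ, t m ^ ((i : ℕ) + (j : ℕ) + 1) * (1 - t m)

noncomputable def Mmat (n : ℕ) : Matrix (Fin n) (Fin n) ℝ :=
  Matrix.of fun i j => ∑' m : ℕ, g (i : ℕ) (t m) * g (j : ℕ) (t m)

lemma hankel_eq (n : ℕ) : hankel zetaVal n 0 = (A n).det := by
  unfold hankel A
  congr 1
  funext i j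
  simp only [Matrix.of_apply]
  rw [zetaVal_eq]

lemma detAB (n : ℕ) : (A (n + 1)).det = (Bmat (n + 1)).det := by
  apply Matrix.det_eq_of_forall_row_eq_smul_add_pred (c := fun _ => 1)
  · intro j
    simp [A, Bmat]
  · intro i j
    simp only [A, Bmat, Matrix.of_apply, Fin.val_succ, Fin.coe_castSucc, one_mul]
    rw [if_neg (by omega)]
    rw [← tsum_neg, ← Summable.tsum_add ((summable_tpow_mul (by omega)).neg) (summable_tpow (by omega))]
    apply tsum_congr
    intro m
    have h1 : (i : ℕ) + 1 + (j : ℕ) + 2 = ((i : ℕ) + (j : ℕ)) + 3 := by omega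
    have h2 : (i : ℕ) + 1 + (j : ℕ) + 1 = ((i : ℕ) + (j : ℕ)) + 2 := by omega
    have h3 : (i : ℕ) + (j : ℕ) + 2 = ((i : ℕ) + (j : ℕ)) + 2 := by omega
    rw [h1, h2, h3]
    ring

lemma detBM (n : ℕ) : (Bmat (n + 1)).det = (Mmat (n + 1)).det := by
  apply Matrix.det_eq_of_forall_col_eq_smul_add_pred (c := fun _ => 1)
  · intro i
    simp only [Bmat, Mmat, Matrix.of_apply, Fin.val_zero]
    by_cases hi : (i : ℕ) = 0
    · rw [if_pos hi, hi]
      apply tsum_congr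
      intro m
      simp [g, sq]
    · obtain ⟨i', hii⟩ := Nat.exists_eq_succ_of_ne_zero hi
      rw [if_neg hi, hii]
      simp only [← tsum_neg]
      apply tsum_congr
      intro m
      rw [g, g]
      simp only [Nat.succ_eq_add_one]
      ring
  · intro i j
    simp only [Bmat, Mmat, Matrix.of_apply, Fin.val_succ, Fin.coe_castSucc, one_mul]
    by_cases hi : (i : ℕ) = 0
    · rw [if_pos hi, if_pos hi, hi]
      rw [← Summable.tsum_add (summable_gg 0 ((j : ℕ) + 1)) (summable_tpow (by omega))]
      apply tsum_congr
      intro m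
      rw [g, g]
      ring
    · obtain ⟨i', hii⟩ := Nat.exists_eq_succ_of_ne_zero hi
      rw [if_neg hi, if_neg hi, hii]
      simp only [← tsum_neg]
      rw [← Summable.tsum_add (summable_gg (i' + 1) ((j : ℕ) + 1)) ((summable_tpow_mul
        (k := i' + 1 + (j : ℕ) + 1) (by omega)).neg)]
      apply tsum_congr
      intro m
      rw [g, g]
      have h1 : i' + 1 + ((j : ℕ) + 1) + 1 = (i' + (j : ℕ)) + 3 := by omega
      have h2 : i' + 1 + (j : ℕ) + 1 = (i' + (j : ℕ)) + 2 := by omega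
      rw [h1, h2]
      ring

lemma t_zero : t 0 = 1 := by unfold t; norm_num

lemma one_le_zeta2 : 1 ≤ zetaVal 2 := by
  rw [zetaVal_eq]
  have := Summable.le_tsum summable_t_sq 0 (fun m _ => sq_nonneg _)
  rwa [t_zero, one_pow] at this

lemma zeta2_pos : 0 < zetaVal 2 := lt_of_lt_of_le one_pos one_le_zeta2

lemma g_factor (k m : ℕ) : |g k (t m)| ≤ 2 * (2:ℝ)⁻¹ ^ k * t m := by
  have h0 := t_pos m
  match k with
  | 0 =>
    rw [g, abs_of_pos h0, pow_zero]
    nlinarith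
  | (k + 1) =>
    match m with
    | 0 =>
      rw [g, t_zero]
      norm_num
    | (m + 1) =>
      have ht : t (m + 1) ≤ 2⁻¹ := by
        unfold t
        rw [inv_le_inv₀ (by positivity) (by norm_num)]
        push_cast; linarith [Nat.cast_nonneg (α := ℝ) m]
      have h1 : (1:ℝ) - t (m+1) ≤ 1 := by linarith [t_pos (m+1)]
      have h1' : (0:ℝ) ≤ 1 - t (m+1) := by
        have := t_le_one (m+1); linarith
      rw [g, abs_neg, abs_of_nonneg (mul_nonneg (pow_nonneg (t_pos _).le _) h1')]
      have h2 : t (m+1) ^ (k+1) * (1 - t (m+1)) ≤ t (m+1) ^ (k+1) :=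
        by nlinarith [pow_pos (t_pos (m+1)) (k+1)]
      have h3 : t (m+1) ^ (k+1) ≤ (2:ℝ)⁻¹ ^ k * t (m+1) := by
        rw [pow_succ]
        exact mul_le_mul_of_nonneg_right (pow_le_pow_left₀ (t_pos _).le ht k) (t_pos _).le
      have h4 : ((2:ℝ)⁻¹) ^ k * t (m+1) = 2 * (2:ℝ)⁻¹ ^ (k+1) * t (m+1) := by
        rw [pow_succ]; ring
      linarith

lemma Mbound (i j : ℕ) :
    |∑' m : ℕ, g i (t m) * g j (t m)| ≤ 4 * zetaVal 2 * (2:ℝ)⁻¹ ^ (i + j) := by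
  have hpt : ∀ m : ℕ, |g i (t m) * g j (t m)| ≤ 4 * (2:ℝ)⁻¹ ^ (i + j) * t m ^ 2 := by
    intro m
    rw [abs_mul]
    calc |g i (t m)| * |g j (t m)| ≤ (2 * (2:ℝ)⁻¹ ^ i * t m) * (2 * (2:ℝ)⁻¹ ^ j * t m) :=
          mul_le_mul (g_factor i m) (g_factor j m) (abs_nonneg _)
            (mul_nonneg (by positivity) (t_pos m).le)
      _ = 4 * (2:ℝ)⁻¹ ^ (i + j) * t m ^ 2 := by rw [pow_add]; ring
  have hs2 : Summable (fun m : ℕ => 4 * (2:ℝ)⁻¹ ^ (i + j) * t m ^ 2) :=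
    summable_t_sq.mul_left _
  have step1 : |∑' m : ℕ, g i (t m) * g j (t m)| ≤ ∑' m : ℕ, |g i (t m) * g j (t m)| := by
    simpa only [Real.norm_eq_abs] using norm_tsum_le_tsum_norm (f := fun m : ℕ => g i (t m) * g j (t m)) ((summable_gg i j).abs)
  have step2 : ∑' m : ℕ, |g i (t m) * g j (t m)| ≤ ∑' m : ℕ, 4 * (2:ℝ)⁻¹ ^ (i + j) * t m ^ 2 :=
    Summable.tsum_le_tsum hpt ((summable_gg i j).abs) hs2
  have step3 : ∑' m : ℕ, 4 * (2:ℝ)⁻¹ ^ (i + j) * t m ^ 2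
      = 4 * (2:ℝ)⁻¹ ^ (i + j) * ∑' m : ℕ, t m ^ 2 := tsum_mul_left
  have step4 : 4 * (2:ℝ)⁻¹ ^ (i + j) * ∑' m : ℕ, t m ^ 2
      = 4 * zetaVal 2 * (2:ℝ)⁻¹ ^ (i + j) := by rw [← zetaVal_eq]; ring
  linarith

lemma detM_bound (n : ℕ) :
    |(Mmat n).det| ≤ ((n.factorial : ℝ) * (4 * zetaVal 2) ^ n) *
      (((2:ℝ) ^ (∑ i ∈ Finset.range n, i))⁻¹) ^ 2 := by
  set K : ℝ := 4 * zetaVal 2 with hK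
  have hK0 : 0 < K := by have := zeta2_pos; positivity
  set D : Matrix (Fin n) (Fin n) ℝ := Matrix.diagonal (fun i : Fin n => ((2:ℝ) ^ (i:ℕ))⁻¹)
    with hD
  set C : Matrix (Fin n) (Fin n) ℝ :=
    Matrix.of (fun i j : Fin n => (2:ℝ) ^ (i:ℕ) * (2:ℝ) ^ (j:ℕ) * Mmat n i j) with hC
  have hfact : Mmat n = D * C * D := by
    ext i j
    rw [Matrix.mul_diagonal, Matrix.diagonal_mul]
    simp only [hC, Matrix.of_apply]
    have h2i : ((2:ℝ) ^ (i:ℕ)) ≠ 0 := by positivity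
    have h2j : ((2:ℝ) ^ (j:ℕ)) ≠ 0 := by positivity
    field_simp
  have hCle : ∀ i j : Fin n, |C i j| ≤ K := by
    intro i j
    have hM := Mbound (i : ℕ) (j : ℕ)
    simp only [hC, Matrix.of_apply, Mmat, abs_mul]
    rw [abs_of_pos (show (0:ℝ) < 2 ^ (i:ℕ) by positivity),
      abs_of_pos (show (0:ℝ) < 2 ^ (j:ℕ) by positivity)]
    calc (2:ℝ) ^ (i:ℕ) * 2 ^ (j:ℕ) * |∑' m : ℕ, g (i:ℕ) (t m) * g (j:ℕ) (t m)|
        ≤ (2:ℝ) ^ (i:ℕ) * 2 ^ (j:ℕ) * (K * (2:ℝ)⁻¹ ^ ((i:ℕ) + (j:ℕ))) := by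
          exact mul_le_mul_of_nonneg_left hM (by positivity)
      _ = K := by
          rw [inv_pow, pow_add]
          field_simp
  have hCdet : |C.det| ≤ (n.factorial : ℝ) * K ^ n := by
    have := Matrix.det_le (A := C) (abv := AbsoluteValue.abs) (x := K) (fun i j => hCle i j)
    simpa [Fintype.card_fin, nsmul_eq_mul] using this
  have hDdet : D.det = ((2:ℝ) ^ (∑ i ∈ Finset.range n, i))⁻¹ := by
    rw [hD, Matrix.det_diagonal, Finset.prod_inv_distrib]
    congr 1
    rw [Finset.prod_pow_eq_pow_sum]
    congr 1
    exact Fin.sum_univ_eq_sum_range (fun i => i) n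
  have hdet : (Mmat n).det = D.det * C.det * D.det := by
    rw [hfact, Matrix.det_mul, Matrix.det_mul]
  rw [hdet, hDdet, abs_mul, abs_mul]
  rw [abs_of_pos (show (0:ℝ) < ((2:ℝ) ^ (∑ i ∈ Finset.range n, i))⁻¹ by positivity)]
  set w : ℝ := ((2:ℝ) ^ (∑ i ∈ Finset.range n, i))⁻¹ with hw
  have hw0 : 0 < w := by rw [hw]; positivity
  calc w * |C.det| * w ≤ w * ((n.factorial : ℝ) * K ^ n) * w := by
        apply mul_le_mul_of_nonneg_right (mul_le_mul_of_nonneg_left hCdet hw0.le) hw0.le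
    _ = ((n.factorial : ℝ) * K ^ n) * w ^ 2 := by ring

lemma t_inj : Function.Injective t := by
  intro a b hab
  unfold t at hab
  have := inv_injective hab
  have : (a : ℝ) = b := by linarith [this]
  exact_mod_cast this

lemma quad (n : ℕ) (v : Fin n → ℝ) :
    v ⬝ᵥ (A n).mulVec v = ∑' m : ℕ, (∑ i : Fin n, v i * t m ^ ((i:ℕ) + 1)) ^ 2 := by
  have hsum : ∀ i j : Fin n, Summable (fun m : ℕ => v i * v j * t m ^ ((i:ℕ) + (j:ℕ) + 2)) :=
    fun i j => (summable_tpow (by omega)).mul_left _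
  have hsum2 : ∀ i : Fin n,
      Summable (fun m : ℕ => ∑ j : Fin n, v i * v j * t m ^ ((i:ℕ) + (j:ℕ) + 2)) :=
    fun i => summable_sum (fun j _ => hsum i j)
  calc v ⬝ᵥ (A n).mulVec v
      = ∑ i : Fin n, ∑ j : Fin n, v i * v j * ∑' m : ℕ, t m ^ ((i:ℕ) + (j:ℕ) + 2) := by
        simp only [dotProduct, Matrix.mulVec, A, Matrix.of_apply, Finset.mul_sum]
        exact Finset.sum_congr rfl fun i _ => Finset.sum_congr rfl fun j _ => by ring
    _ = ∑ i : Fin n, ∑ j : Fin n, ∑' m : ℕ, v i * v j * t m ^ ((i:ℕ) + (j:ℕ) + 2) := by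
        exact Finset.sum_congr rfl fun i _ => Finset.sum_congr rfl fun j _ =>
          (tsum_mul_left).symm
    _ = ∑ i : Fin n, ∑' m : ℕ, ∑ j : Fin n, v i * v j * t m ^ ((i:ℕ) + (j:ℕ) + 2) := by
        exact Finset.sum_congr rfl fun i _ => (Summable.tsum_finsetSum (fun j _ => hsum i j)).symm
    _ = ∑' m : ℕ, ∑ i : Fin n, ∑ j : Fin n, v i * v j * t m ^ ((i:ℕ) + (j:ℕ) + 2) := by
        exact (Summable.tsum_finsetSum (fun i _ => hsum2 i)).symm
    _ = ∑' m : ℕ, (∑ i : Fin n, v i * t m ^ ((i:ℕ) + 1)) ^ 2 := by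
        apply tsum_congr
        intro m
        rw [sq, Finset.sum_mul_sum]
        exact Finset.sum_congr rfl fun i _ => Finset.sum_congr rfl fun j _ => by
          rw [show (i:ℕ) + (j:ℕ) + 2 = ((i:ℕ) + 1) + ((j:ℕ) + 1) by omega, pow_add]
          ring

lemma detA_ne_zero (n : ℕ) : (A n).det ≠ 0 := by
  intro h
  obtain ⟨v, hv, hAv⟩ := (Matrix.exists_mulVec_eq_zero_iff).mpr h
  have h0 : v ⬝ᵥ (A n).mulVec v = 0 := by rw [hAv, dotProduct_zero]
  rw [quad] at h0
  set p : ℕ → ℝ := fun m => ∑ i : Fin n, v i * t m ^ ((i:ℕ) + 1) with hp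
  have hex : ∃ μ : Fin n, p (μ : ℕ) ≠ 0 := by
    by_contra hall
    push_neg at hall
    set W : Matrix (Fin n) (Fin n) ℝ :=
      Matrix.of (fun μ i : Fin n => t (μ : ℕ) ^ ((i:ℕ) + 1)) with hW
    have hWv : W.mulVec v = 0 := by
      funext μ
      have := hall μ
      simp only [Matrix.mulVec, dotProduct, hW, Matrix.of_apply, Pi.zero_apply]
      rw [← this, hp]
      exact Finset.sum_congr rfl fun i _ => by ring
    have hWdet : W.det ≠ 0 := by
      have hfac : W = Matrix.diagonal (fun μ : Fin n => t (μ : ℕ)) *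
          Matrix.vandermonde (fun μ : Fin n => t (μ : ℕ)) := by
        ext μ i
        rw [Matrix.diagonal_mul]
        simp only [hW, Matrix.of_apply, Matrix.vandermonde]
        rw [pow_succ]
        ring
      rw [hfac, Matrix.det_mul, Matrix.det_diagonal]
      apply mul_ne_zero
      · exact Finset.prod_ne_zero_iff.mpr fun μ _ => (t_pos _).ne'
      · rw [Matrix.det_vandermonde_ne_zero_iff]
        intro a b hab
        exact Fin.val_injective (t_inj hab)
    exact hv (Matrix.eq_zero_of_mulVec_eq_zero hWdet hWv)
  obtain ⟨μ, hμ⟩ := hex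
  have hps : Summable (fun m : ℕ => p m ^ 2) := by
    set c : ℝ := ∑ i : Fin n, |v i| with hc
    have hc0 : 0 ≤ c := Finset.sum_nonneg fun i _ => abs_nonneg _
    have hb : ∀ m : ℕ, p m ^ 2 ≤ c ^ 2 * t m ^ 2 := by
      intro m
      have habs : |p m| ≤ c * t m := by
        calc |p m| ≤ ∑ i : Fin n, |v i * t m ^ ((i:ℕ) + 1)| := Finset.abs_sum_le_sum_abs _ _
          _ ≤ ∑ i : Fin n, |v i| * t m := by
              apply Finset.sum_le_sum
              intro i _
              rw [abs_mul, abs_of_pos (pow_pos (t_pos m) _)]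
              apply mul_le_mul_of_nonneg_left _ (abs_nonneg _)
              calc t m ^ ((i:ℕ) + 1) ≤ t m ^ 1 :=
                    pow_le_pow_of_le_one (t_pos m).le (t_le_one m) (by omega)
                _ = t m := pow_one _
          _ = c * t m := by rw [hc, Finset.sum_mul]
      calc p m ^ 2 = |p m| ^ 2 := (sq_abs _).symm
        _ ≤ (c * t m) ^ 2 := by
            apply pow_le_pow_left₀ (abs_nonneg _) habs
        _ = c ^ 2 * t m ^ 2 := by ring
    exact Summable.of_nonneg_of_le (fun m => sq_nonneg _) hb (summable_t_sq.mul_left _)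
  have hpos : 0 < ∑' m : ℕ, p m ^ 2 :=
    Summable.tsum_pos hps (fun m => sq_nonneg _) (μ : ℕ) (by positivity)
  rw [hp] at hpos
  linarith [h0, hpos]

lemma hankel_abs_le (n : ℕ) (hn : 1 ≤ n) :
    |hankel zetaVal n 0| ≤ ((n.factorial : ℝ) * (4 * zetaVal 2) ^ n) *
      (((2:ℝ) ^ (∑ i ∈ Finset.range n, i))⁻¹) ^ 2 := by
  obtain ⟨n', rfl⟩ : ∃ n', n = n' + 1 := ⟨n - 1, by omega⟩
  rw [hankel_eq, detAB, detBM]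
  exact detM_bound (n' + 1)

lemma hankel_ne_zero (n : ℕ) : hankel zetaVal n 0 ≠ 0 := by
  rw [hankel_eq]; exact detA_ne_zero n

end HZaux

theorem hankel_zeta_log_decay :
    ∀ ε ∈ Set.Ioo (0 : ℝ) 1, ∃ N₀ : ℕ, ∀ n ≥ N₀,
      Real.log (hankel zetaVal n 0) < -(n : ℝ) ^ 2 * Real.log (2 - ε) := by
  intro ε hε
  obtain ⟨hε0, hε1⟩ := hε
  set K : ℝ := 4 * zetaVal 2 with hKdef
  have hK0 : 0 < K := by have := HZaux.zeta2_pos; positivity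
  set δ : ℝ := Real.log 2 - Real.log (2 - ε) with hδdef
  have hδ : 0 < δ := by
    have := Real.log_lt_log (by linarith : (0:ℝ) < 2 - ε) (by linarith : 2 - ε < 2)
    simp only [hδdef]; linarith
  clear_value K δ
  have hlo := Real.isLittleO_log_id_atTop.def (show 0 < δ/4 by positivity)
  rw [Filter.eventually_atTop] at hlo
  obtain ⟨x₀, hx₀⟩ := hlo
  obtain ⟨N₂, hN₂⟩ := exists_nat_gt ((4 * (|Real.log K| + Real.log 2)) / δ)
  refine ⟨max (⌈x₀⌉₊ + 1) (N₂ + 1), fun n hn => ?_⟩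
  have hn1 : 1 ≤ n := le_trans (le_trans (Nat.le_add_left 1 _) (le_max_left _ _)) hn
  have hn0 : (0:ℝ) ≤ (n:ℝ) := Nat.cast_nonneg n
  have hn1' : (1:ℝ) ≤ (n:ℝ) := by exact_mod_cast hn1
  have hn2 : (1:ℝ) ≤ (n:ℝ)^2 := by nlinarith
  -- log n is small
  have hnx : x₀ ≤ (n:ℝ) := by
    have h1 : ⌈x₀⌉₊ + 1 ≤ n := le_trans (le_max_left _ _) hn
    have h2 : (⌈x₀⌉₊ : ℝ) ≤ (n:ℝ) := by exact_mod_cast le_trans (Nat.le_succ _) h1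
    exact le_trans (Nat.le_ceil x₀) h2
  have hblog : Real.log (n:ℝ) ≤ δ/4 * (n:ℝ) := by
    have := hx₀ (n:ℝ) hnx
    simp only [Real.norm_eq_abs, id] at this
    calc Real.log (n:ℝ) ≤ |Real.log (n:ℝ)| := le_abs_self _
      _ ≤ δ/4 * |(n:ℝ)| := this
      _ = δ/4 * (n:ℝ) := by rw [abs_of_nonneg hn0]
  have hcond2 : |Real.log K| + Real.log 2 ≤ δ/4 * (n:ℝ) := by
    have h1 : (N₂:ℝ) ≤ (n:ℝ) := by
      have : N₂ + 1 ≤ n := le_trans (le_max_right _ _) hn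
      exact_mod_cast le_trans (Nat.le_succ _) this
    have h2 : (4 * (|Real.log K| + Real.log 2)) / δ < (n:ℝ) := lt_of_lt_of_le hN₂ h1
    rw [div_lt_iff₀ hδ] at h2
    nlinarith [h2]
  -- the determinant bound
  set s : ℕ := ∑ i ∈ Finset.range n, i with hsdef
  have hne : hankel zetaVal n 0 ≠ 0 := HZaux.hankel_ne_zero n
  have hlog1 : Real.log (hankel zetaVal n 0) ≤
      Real.log (((n.factorial : ℝ) * K ^ n) * (((2:ℝ) ^ s)⁻¹) ^ 2) := by
    rw [← Real.log_abs, hKdef]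
    exact Real.log_le_log (abs_pos.mpr hne) (HZaux.hankel_abs_le n hn1)
  have hKn : (K:ℝ) ^ n ≠ 0 := (pow_pos hK0 n).ne'
  have hfacne : (n.factorial : ℝ) ≠ 0 := by
    have := n.factorial_pos
    positivity
  have hwne : (((2:ℝ) ^ s)⁻¹) ^ 2 ≠ 0 := by positivity
  have hlogRHS : Real.log (((n.factorial : ℝ) * K ^ n) * (((2:ℝ) ^ s)⁻¹) ^ 2) =
      Real.log (n.factorial : ℝ) + (n:ℝ) * Real.log K - 2 * ((s:ℝ) * Real.log 2) := by
    rw [Real.log_mul (mul_ne_zero hfacne hKn) hwne,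
      Real.log_mul hfacne hKn,
      Real.log_pow, Real.log_pow, Real.log_inv, Real.log_pow]
    ring
  have hfac : Real.log (n.factorial : ℝ) ≤ (n:ℝ) * Real.log (n:ℝ) := by
    have h1 : (n.factorial : ℝ) ≤ ((n:ℝ))^n := by exact_mod_cast Nat.factorial_le_pow n
    have h2 := Real.log_le_log (by exact_mod_cast n.factorial_pos) h1
    rwa [Real.log_pow] at h2
  have hs : 2 * (s:ℝ) = (n:ℝ)^2 - (n:ℝ) := by
    have h1 := Finset.sum_range_id_mul_two n
    have h2 : ((∑ i ∈ Finset.range n, i) * 2 : ℕ) = (n * (n - 1) : ℕ) := h1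
    have h3 : ((s * 2 : ℕ) : ℝ) = ((n * (n-1) : ℕ) : ℝ) := by rw [hsdef]; exact_mod_cast h2
    push_cast [Nat.cast_sub hn1] at h3
    nlinarith [h3]
  have hs' : (2:ℝ) * ((s:ℝ) * Real.log 2) = ((n:ℝ)^2 - (n:ℝ)) * Real.log 2 := by
    rw [← hs]; ring
  have hmulrw : (n:ℝ) * (δ/4 * (n:ℝ)) = δ/4 * (n:ℝ)^2 := by ring
  have ha : (n:ℝ) * Real.log (n:ℝ) ≤ δ/4 * (n:ℝ)^2 := by
    linarith [mul_le_mul_of_nonneg_left hblog hn0]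
  have hb : (n:ℝ) * Real.log K + (n:ℝ) * Real.log 2 ≤ δ/4 * (n:ℝ)^2 := by
    linarith [mul_le_mul_of_nonneg_left hcond2 hn0,
      mul_le_mul_of_nonneg_left (le_abs_self (Real.log K)) hn0]
  have hδP : 0 < δ * (n:ℝ)^2 := mul_pos hδ (by positivity)
  have hgap : δ/4 * (n:ℝ)^2 + δ/4 * (n:ℝ)^2 < δ * (n:ℝ)^2 := by linarith
  have hδn : δ * (n:ℝ)^2 = Real.log 2 * (n:ℝ)^2 - Real.log (2-ε) * (n:ℝ)^2 := by
    rw [hδdef]; ring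
  linarith [hlog1, hlogRHS.le, hlogRHS.ge, hfac, hs', ha, hb, hgap, hδn.le, hδn.ge]
end

section
/- Let F(s) = Σ_{n≥1} f(n) n^{-s} be a nondegenerate ordinary Dirichlet series with f(n) ≥ 0, convergent for Re(s) ≥ s₀. Suppose F(k) ∈ ℚ for all integers k ≥ R ≥ s₀ − 2, and write F(k) = p_k/q_k with p_k, q_k coprime positive integers. Define D_m[F] = lcm(q_{R+2}, q_{R+3}, ..., q_{R+m}). Then D_m[F] grows at least exponentially in m: there exists C > 1 such that D_m[F] > C^m for infinitely many m. -/
theorem denominators_grow_exponentially (f : ℕ → ℝ) (s₀ : ℝ)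
    (hf : ∀ n, 0 ≤ f n)
    (hconv : ∀ s : ℝ, s₀ ≤ s → Summable (fun m : ℕ => f (m + 1) / ((m + 1 : ℕ) : ℝ) ^ s))
    (hinf : {n : ℕ | f n ≠ 0}.Infinite)
    (F : ℤ → ℝ) (hF : ∀ k : ℤ, F k = ∑' m : ℕ, f (m + 1) / (((m + 1 : ℕ) : ℝ)) ^ (k : ℤ))
    (R : ℤ) (hR : (R : ℝ) ≥ s₀ - 2)
    (p q : ℤ → ℕ)
    (hpq : ∀ k : ℤ, R ≤ k → 0 < p k ∧ 0 < q k ∧ Nat.Coprime (p k) (q k) ∧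
      F k = (p k : ℝ) / (q k : ℝ))
    (D : ℕ → ℕ) (hD : ∀ m : ℕ, D m = (Finset.Icc 2 m).lcm (fun j => q (R + j))) :
    ∃ C : ℝ, 1 < C ∧ ∀ m₀ : ℕ, ∃ m ≥ m₀, (D m : ℝ) > C ^ m := by
  obtain ⟨hp2, hq2, hcop2, hF2⟩ := hpq (R + 2) (by linarith)
  have hBpos : 0 < F (R + 2) := by
    rw [hF2]
    exact div_pos (by exact_mod_cast hp2) (by exact_mod_cast hq2)
  have hconv' : ∀ k : ℤ, R + 2 ≤ k →
      Summable (fun n : ℕ => f (n + 1) / ((n + 1 : ℕ) : ℝ) ^ k) := by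
    intro k hk
    have hs : s₀ ≤ (k : ℝ) := by
      have h2 : ((R : ℝ) + 2) ≤ (k : ℝ) := by exact_mod_cast hk
      linarith
    exact (hconv (k : ℝ) hs).congr fun n => by rw [Real.rpow_intCast]
  have key : ∀ m : ℕ, 3 ≤ m → (2 : ℝ) ^ (m - 3) ≤ (D m : ℝ) * F (R + 2) := by
    intro m hm
    set k1 : ℤ := R + ((m - 1 : ℕ) : ℤ) with hk1
    set k2 : ℤ := R + (m : ℤ) with hk2
    have hk1R2 : R + 2 ≤ k1 := by omega
    have hk12 : k1 < k2 := by omega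
    have hs1 := hconv' k1 hk1R2
    have hs2 := hconv' k2 (by omega)
    have hsB := hconv' (R + 2) le_rfl
    obtain ⟨hp1pos, hq1pos, -, hFk1⟩ := hpq k1 (by omega)
    obtain ⟨hp2pos', hq2pos', -, hFk2⟩ := hpq k2 (by omega)
    -- term-wise nonnegativity
    have hterm_nonneg : ∀ n : ℕ,
        0 ≤ f (n + 1) / ((n + 1 : ℕ) : ℝ) ^ k1 - f (n + 1) / ((n + 1 : ℕ) : ℝ) ^ k2 := by
      intro n
      have hb : (1 : ℝ) ≤ ((n + 1 : ℕ) : ℝ) := by exact_mod_cast Nat.one_le_iff_ne_zero.mpr (Nat.succ_ne_zero n)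
      have hple : ((n + 1 : ℕ) : ℝ) ^ k1 ≤ ((n + 1 : ℕ) : ℝ) ^ k2 := by
        exact zpow_le_zpow_right₀ hb hk12.le
      have hpos1 : (0 : ℝ) < ((n + 1 : ℕ) : ℝ) ^ k1 := zpow_pos (by linarith) _
      have h1 : f (n + 1) / ((n + 1 : ℕ) : ℝ) ^ k2 ≤ f (n + 1) / ((n + 1 : ℕ) : ℝ) ^ k1 := by
        gcongr
        exact hf _
      linarith
    -- positivity of the difference
    obtain ⟨n₀, hn₀f, hn₀gt⟩ := hinf.exists_gt 1
    have hWpos : 0 < F k1 - F k2 := by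
      rw [hF k1, hF k2, ← Summable.tsum_sub hs1 hs2]
      refine Summable.tsum_pos (hs1.sub hs2) hterm_nonneg (n₀ - 1) ?_
      have hn1 : n₀ - 1 + 1 = n₀ := by omega
      rw [hn1]
      have hfpos : 0 < f n₀ := lt_of_le_of_ne (hf n₀) (Ne.symm hn₀f)
      have hb1 : (1 : ℝ) < ((n₀ : ℕ) : ℝ) := by exact_mod_cast hn₀gt
      have hlt : ((n₀ : ℕ) : ℝ) ^ k1 < ((n₀ : ℕ) : ℝ) ^ k2 :=
        zpow_lt_zpow_right₀ hb1 hk12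
      have hpos1 : (0 : ℝ) < ((n₀ : ℕ) : ℝ) ^ k1 := zpow_pos (by linarith) _
      have := div_lt_div_of_pos_left hfpos hpos1 hlt
      linarith
    -- upper bound for the difference
    have hWle : F k1 - F k2 ≤ ((2 : ℝ) ^ (m - 3))⁻¹ * F (R + 2) := by
      rw [hF k1, hF k2, ← Summable.tsum_sub hs1 hs2, hF (R + 2), ← tsum_mul_left]
      refine Summable.tsum_le_tsum ?_ (hs1.sub hs2) (hsB.mul_left _)
      intro n
      rcases Nat.eq_zero_or_pos n with h0 | hn
      · subst h0
        have hone : ((0 + 1 : ℕ) : ℝ) = 1 := by norm_num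
        rw [hone, one_zpow, one_zpow, one_zpow, div_one, sub_self]
        exact mul_nonneg (by positivity) (hf 1)
      · have hb2 : (2 : ℝ) ≤ ((n + 1 : ℕ) : ℝ) := by exact_mod_cast Nat.succ_le_succ hn
        have hb0 : (0 : ℝ) < ((n + 1 : ℕ) : ℝ) := by linarith
        have hsplit : ((n + 1 : ℕ) : ℝ) ^ k1
            = ((n + 1 : ℕ) : ℝ) ^ (R + 2) * ((n + 1 : ℕ) : ℝ) ^ (((m - 3 : ℕ) : ℤ)) := by
          rw [← zpow_add₀ (ne_of_gt hb0)]
          congr 1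
          omega
        have hdropaux : 0 ≤ f (n + 1) / ((n + 1 : ℕ) : ℝ) ^ k2 :=
          div_nonneg (hf _) (zpow_pos hb0 _).le
        have h2b : (2 : ℝ) ^ (m - 3) ≤ ((n + 1 : ℕ) : ℝ) ^ (((m - 3 : ℕ) : ℤ)) := by
          rw [zpow_natCast]
          exact pow_le_pow_left₀ (by norm_num) hb2 _
        have hmain : f (n + 1) / ((n + 1 : ℕ) : ℝ) ^ k1
            ≤ ((2 : ℝ) ^ (m - 3))⁻¹ * (f (n + 1) / ((n + 1 : ℕ) : ℝ) ^ (R + 2)) := by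
          have hre : ((2 : ℝ) ^ (m - 3))⁻¹ * (f (n + 1) / ((n + 1 : ℕ) : ℝ) ^ (R + 2))
              = f (n + 1) / (((n + 1 : ℕ) : ℝ) ^ (R + 2) * (2 : ℝ) ^ (m - 3)) := by
            ring
          rw [hre, hsplit]
          gcongr
          all_goals first
            | exact hf _
            | exact h2b
            | positivity
        linarith
    -- divisibility and positivity of D m
    have hmem1 : (m - 1) ∈ Finset.Icc 2 m := by
      simp only [Finset.mem_Icc]; omega
    have hmem2 : m ∈ Finset.Icc 2 m := by
      simp only [Finset.mem_Icc]; omega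
    have hq1d : q k1 ∣ D m := by
      rw [hD m, hk1]
      exact Finset.dvd_lcm hmem1
    have hq2d : q k2 ∣ D m := by
      rw [hD m, hk2]
      exact_mod_cast Finset.dvd_lcm hmem2
    have hDne : D m ≠ 0 := by
      rw [hD m, Ne, Finset.lcm_eq_zero_iff]
      rintro ⟨j, hj, hj0⟩
      simp only [Finset.coe_Icc, Set.mem_Icc, Finset.mem_Icc] at hj
      have hqpos := (hpq (R + j) (by omega)).2.1
      exact absurd hj0 hqpos.ne'
    have hDpos : 0 < (D m : ℝ) := by exact_mod_cast Nat.pos_of_ne_zero hDne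
    -- D m * (F k1 - F k2) is a positive integer
    have e1 : ((D m / q k1 * p k1 : ℕ) : ℝ) = (D m : ℝ) * F k1 := by
      have hc : ((D m / q k1 : ℕ) : ℝ) = (D m : ℝ) / (q k1 : ℝ) :=
        Nat.cast_div hq1d (by exact_mod_cast hq1pos.ne')
      rw [Nat.cast_mul, hc, hFk1]
      ring
    have e2 : ((D m / q k2 * p k2 : ℕ) : ℝ) = (D m : ℝ) * F k2 := by
      have hc : ((D m / q k2 : ℕ) : ℝ) = (D m : ℝ) / (q k2 : ℝ) :=
        Nat.cast_div hq2d (by exact_mod_cast hq2pos'.ne')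
      rw [Nat.cast_mul, hc, hFk2]
      ring
    have hz : (1 : ℝ) ≤ (D m : ℝ) * (F k1 - F k2) := by
      have hint : (D m : ℝ) * (F k1 - F k2)
          = ((D m / q k1 * p k1 : ℕ) : ℝ) - ((D m / q k2 * p k2 : ℕ) : ℝ) := by
        rw [e1, e2]; ring
      rw [hint]
      have hposz : (0 : ℝ) < ((D m / q k1 * p k1 : ℕ) : ℝ) - ((D m / q k2 * p k2 : ℕ) : ℝ) := by
        rw [← hint]; exact mul_pos hDpos hWpos
      have hlt : (D m / q k2 * p k2 : ℕ) < (D m / q k1 * p k1 : ℕ) := by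
        exact_mod_cast sub_pos.mp hposz
      have : ((D m / q k2 * p k2 : ℕ) : ℝ) + 1 ≤ ((D m / q k1 * p k1 : ℕ) : ℝ) := by
        exact_mod_cast hlt
      linarith
    have h1 : (1 : ℝ) ≤ (D m : ℝ) * (((2 : ℝ) ^ (m - 3))⁻¹ * F (R + 2)) :=
      hz.trans (mul_le_mul_of_nonneg_left hWle (Nat.cast_nonneg _))
    have h2 : (0 : ℝ) < (2 : ℝ) ^ (m - 3) := by positivity
    calc (2 : ℝ) ^ (m - 3) = (2 : ℝ) ^ (m - 3) * 1 := (mul_one _).symm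
      _ ≤ (2 : ℝ) ^ (m - 3) * ((D m : ℝ) * (((2 : ℝ) ^ (m - 3))⁻¹ * F (R + 2))) :=
          mul_le_mul_of_nonneg_left h1 h2.le
      _ = (D m : ℝ) * F (R + 2) := by field_simp
  -- conclude with C = √2
  refine ⟨Real.sqrt 2, ?_, ?_⟩
  · have h1 : Real.sqrt 1 < Real.sqrt 2 := Real.sqrt_lt_sqrt (by norm_num) (by norm_num)
    simpa using h1
  · intro m₀
    obtain ⟨j₀, hj₀⟩ := exists_nat_gt (F (R + 2) + 3)
    set j := max (max j₀ m₀) 4 with hj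
    have hj4 : 4 ≤ j := le_max_right _ _
    have hjj₀ : j₀ ≤ j := le_trans (le_max_left _ _) (le_max_left _ _)
    have hjm₀ : m₀ ≤ j := le_trans (le_max_right _ _) (le_max_left _ _)
    refine ⟨2 * j, by omega, ?_⟩
    have hkey := key (2 * j) (by omega)
    have hC : Real.sqrt 2 ^ (2 * j) = 2 ^ j := by
      rw [pow_mul, Real.sq_sqrt (by norm_num : (0 : ℝ) ≤ 2)]
    rw [hC]
    have hBlt : F (R + 2) < (2 : ℝ) ^ (j - 3) := by
      have hjr : (j₀ : ℝ) ≤ (j : ℝ) := by exact_mod_cast hjj₀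
      have h1 : F (R + 2) < (j : ℝ) - 3 := by linarith
      have h2 : ((j - 3 : ℕ) : ℝ) = (j : ℝ) - 3 := by
        have : (3 : ℕ) ≤ j := by omega
        push_cast [Nat.cast_sub this]
        ring
      have h3 : (j - 3 : ℕ) < 2 ^ (j - 3) := Nat.lt_two_pow_self
      have h4 : ((j - 3 : ℕ) : ℝ) < (2 : ℝ) ^ (j - 3) := by exact_mod_cast h3
      linarith [h2 ▸ h4]
    have hsplit : (2 : ℝ) ^ (2 * j - 3) = 2 ^ j * 2 ^ (j - 3) := by
      rw [← pow_add]; congr 1; omega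
    have hlt : (2 : ℝ) ^ j * F (R + 2) < (D (2 * j) : ℝ) * F (R + 2) := by
      calc (2 : ℝ) ^ j * F (R + 2) < 2 ^ j * 2 ^ (j - 3) :=
            mul_lt_mul_of_pos_left hBlt (by positivity)
        _ = 2 ^ (2 * j - 3) := hsplit.symm
        _ ≤ (D (2 * j) : ℝ) * F (R + 2) := hkey
    exact lt_of_mul_lt_mul_right hlt hBpos.le
end

section
/- Let a, b be positive integers and define ζ_{a,b}(k) = Σ_{m≥1} m^{-(ak+b)}. Suppose for some R > 0 that ζ_{a,b}(k) ∈ ℚ for all integers k ≥ R, and write ζ_{a,b}(k) = p_k/q_k with p_k, q_k coprime positive integers. Then the sequence {q_k}_{k≥R} is unbounded. -/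
/-- Zeta values along the arithmetic progression `a k + b`. -/
noncomputable def zetaAP (a b k : ℕ) : ℝ := ∑' m : ℕ, 1 / ((m + 1 : ℕ) : ℝ) ^ (a * k + b)

lemma summable_shift (n c : ℕ) (hn : 2 ≤ n) :
    Summable (fun m : ℕ => 1 / (((m + c : ℕ)) : ℝ) ^ n) := by
  have h := (Real.summable_one_div_nat_pow (p := n)).2 hn
  have := (summable_nat_add_iff (f := fun j : ℕ => 1 / (j : ℝ) ^ n) c).2 h
  simpa using this

lemma one_lt_zeta (n : ℕ) (hn : 2 ≤ n) :
    1 < ∑' m : ℕ, 1 / ((m + 1 : ℕ) : ℝ) ^ n := by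
  have hs := summable_shift n 1 hn
  have hle := Summable.sum_le_tsum (Finset.range 2) (fun i _ => by positivity) hs
  rw [Finset.sum_range_succ, Finset.sum_range_one] at hle
  have e1 : (1:ℝ) / (((0 + 1 : ℕ)) : ℝ) ^ n = 1 := by norm_num
  have e2 : (0:ℝ) < 1 / (((1 + 1 : ℕ)) : ℝ) ^ n := by positivity
  linarith

lemma zeta_sub_one_le (n : ℕ) (hn : 2 ≤ n) :
    (∑' m : ℕ, 1 / ((m + 1 : ℕ) : ℝ) ^ n) - 1
      ≤ (1/2 : ℝ) ^ (n - 2) * ∑' m : ℕ, 1 / ((m + 2 : ℕ) : ℝ) ^ 2 := by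
  have hs := summable_shift n 1 hn
  have h0 : (∑' m : ℕ, 1 / ((m + 1 : ℕ) : ℝ) ^ n)
      = 1 + ∑' m : ℕ, 1 / ((m + 2 : ℕ) : ℝ) ^ n := by
    rw [Summable.tsum_eq_zero_add hs]
    norm_num
    congr 1
    ext m
    congr 2
    push_cast; ring
  rw [h0]
  have hterm : ∀ m : ℕ, 1 / ((m + 2 : ℕ) : ℝ) ^ n
      ≤ (1/2 : ℝ) ^ (n - 2) * (1 / ((m + 2 : ℕ) : ℝ) ^ 2) := by
    intro m
    have hm2 : (2 : ℝ) ≤ ((m + 2 : ℕ) : ℝ) := by push_cast; linarith [Nat.cast_nonneg (α := ℝ) m]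
    have hpos : (0:ℝ) < ((m + 2 : ℕ) : ℝ) := by linarith
    rw [show ((1:ℝ)/2)^(n-2) = 1/2^(n-2) from by rw [div_pow, one_pow], div_mul_div_comm, one_mul, div_le_div_iff₀ (by positivity) (by positivity)]
    have : ((m + 2 : ℕ) : ℝ) ^ n = ((m + 2 : ℕ) : ℝ) ^ 2 * ((m + 2 : ℕ) : ℝ) ^ (n - 2) := by
      rw [← pow_add]; congr 1; omega
    rw [this, one_mul]
    have h1 : (2:ℝ) ^ (n-2) ≤ ((m + 2 : ℕ) : ℝ) ^ (n - 2) := pow_le_pow_left₀ (by norm_num) hm2 _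
    have h2 : (1/2 : ℝ)^(n-2) * (2:ℝ)^(n-2) = 1 := by
      rw [← mul_pow]; norm_num
    nlinarith [pow_pos hpos 2, pow_pos (show (0:ℝ) < 1/2 by norm_num) (n-2), pow_pos hpos (n-2)]
  have hs2 := summable_shift 2 2 le_rfl
  have hsum := Summable.tsum_le_tsum hterm (summable_shift n 2 hn) (hs2.mul_left _)
  rw [tsum_mul_left] at hsum
  linarith

theorem zeta_arith_prog_denominators_unbounded (a b R : ℕ) (ha : 0 < a) (hb : 0 < b)
    (hR : 0 < R) (hconv : ∀ k ≥ R, 2 ≤ a * k + b)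
    (p q : ℕ → ℕ)
    (hpq : ∀ k ≥ R, 0 < p k ∧ 0 < q k ∧ Nat.Coprime (p k) (q k) ∧
      zetaAP a b k = (p k : ℝ) / (q k : ℝ)) :
    ∀ B : ℕ, ∃ k ≥ R, B < q k := by
  intro B
  set C : ℝ := ∑' m : ℕ, 1 / ((m + 2 : ℕ) : ℝ) ^ 2 with hC
  have htend : Filter.Tendsto (fun j : ℕ => (1/2:ℝ)^j * C) Filter.atTop (nhds 0) := by
    have h := tendsto_pow_atTop_nhds_zero_of_lt_one (by norm_num : (0:ℝ) ≤ 1/2)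
      (by norm_num : (1/2:ℝ) < 1)
    simpa using h.mul_const C
  have hB1 : (0:ℝ) < 1/(B+1) := by positivity
  obtain ⟨N, hN⟩ := (Filter.eventually_atTop).1 (htend.eventually (gt_mem_nhds hB1))
  set k := max R (N + 1) with hk
  have hkR : R ≤ k := le_max_left _ _
  refine ⟨k, hkR, ?_⟩
  obtain ⟨hp, hq, hco, hzeq⟩ := hpq k hkR
  have hn2 : 2 ≤ a * k + b := hconv k hkR
  have hkN : N + 1 ≤ k := le_max_right _ _
  have hjN : N ≤ a * k + b - 2 := by
    have h1 : k * 1 ≤ k * a := Nat.mul_le_mul_left k ha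
    have : k + 1 ≤ a * k + b := by
      have := Nat.mul_le_mul_left k ha
      nlinarith
    omega
  have hsmall : (1/2:ℝ)^(a*k+b-2) * C < 1/(B+1) := hN _ hjN
  have hub := zeta_sub_one_le (a*k+b) hn2
  have hlt := one_lt_zeta (a*k+b) hn2
  rw [show (∑' m : ℕ, 1 / ((m + 1 : ℕ) : ℝ) ^ (a*k+b)) = zetaAP a b k from rfl, hzeq]
    at hub hlt
  have hq0 : (0:ℝ) < (q k : ℝ) := by exact_mod_cast hq
  have hqltp : (q k : ℝ) < p k := by
    rwa [lt_div_iff₀ hq0, one_mul] at hlt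
  have hqp1 : (q k : ℝ) + 1 ≤ p k := by
    have : q k < p k := by exact_mod_cast hqltp
    exact_mod_cast Nat.succ_le_of_lt this
  have h1q : (1:ℝ)/(q k) ≤ (p k)/(q k) - 1 := by
    rw [div_sub_one hq0.ne']
    gcongr
    linarith
  have hfin : (1:ℝ)/(q k) < 1/(B+1) := by linarith
  have hBq : (B:ℝ) + 1 < q k := by
    rw [div_lt_div_iff₀ hq0 (by positivity : (0:ℝ) < (B:ℝ) + 1)] at hfin
    linarith
  have : B + 1 < q k := by exact_mod_cast hBq
  omega
end

section
/- Let a, b be positive integers and suppose ζ(ak+b) = p_k/q_k is rational (coprime positive integers) for all integers k ≥ R. Then for every ε ∈ (0,1) and sufficiently large m, max_{R ≤ k ≤ m} q_k > m log(2 − ε). -/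
lemma telescope_hasSum : HasSum (fun m : ℕ => 1 / ((m : ℝ) + 1) - 1 / ((m : ℝ) + 2)) 1 := by
  have hnn : ∀ m : ℕ, (0 : ℝ) ≤ 1 / ((m : ℝ) + 1) - 1 / ((m : ℝ) + 2) := by
    intro m
    have h1 : (0:ℝ) < (m:ℝ) + 1 := by positivity
    have := one_div_le_one_div_of_le h1 (by linarith : (m:ℝ) + 1 ≤ (m:ℝ) + 2)
    linarith
  rw [hasSum_iff_tendsto_nat_of_nonneg hnn]
  have h : ∀ N : ℕ, ∑ i ∈ Finset.range N, (1 / ((i : ℝ) + 1) - 1 / ((i : ℝ) + 2))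
      = 1 - 1 / ((N : ℝ) + 1) := by
    intro N
    induction N with
    | zero => simp
    | succ n ih =>
      rw [Finset.sum_range_succ, ih]
      have h1 : ((n:ℝ) + 1) ≠ 0 := by positivity
      have h2 : ((n:ℝ) + 2) ≠ 0 := by positivity
      push_cast
      field_simp
      ring
  simp_rw [h]
  have h0 : Filter.Tendsto (fun N : ℕ => 1 / ((N : ℝ) + 1)) Filter.atTop (nhds 0) :=
    tendsto_one_div_add_atTop_nhds_zero_nat
  have := Filter.Tendsto.const_sub (1:ℝ) h0
  simpa using this

lemma summable_aux (n : ℕ) (hn : 2 ≤ n) (j : ℕ) :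
    Summable (fun m : ℕ => 1 / ((m : ℝ) + j) ^ n) := by
  have h := Real.summable_one_div_nat_pow.mpr (by omega : 1 < n)
  have h2 := (summable_nat_add_iff j).mpr h
  refine h2.congr fun m => ?_
  push_cast
  ring_nf

lemma two_mul_lt_two_pow : ∀ m : ℕ, 3 ≤ m → 2 * m < 2 ^ m := by
  intro m hm
  induction m with
  | zero => omega
  | succ n ih =>
    rcases Nat.lt_or_ge n 3 with h | h
    · have : n = 2 := by omega
      subst this; norm_num
    · have h1 := ih h
      have h2 : 2 ≤ 2 ^ n := Nat.one_lt_two_pow_iff.mpr (by omega)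
      have h3 : 2 ^ (n + 1) = 2 * 2 ^ n := by rw [pow_succ]; ring
      omega

theorem zeta_arith_prog_max_denominator (a b R : ℕ) (ha : 0 < a) (hb : 0 < b)
    (hconv : ∀ k ≥ R, 2 ≤ a * k + b)
    (p q : ℕ → ℕ)
    (hpq : ∀ k ≥ R, 0 < p k ∧ 0 < q k ∧ Nat.Coprime (p k) (q k) ∧
      zetaAP a b k = (p k : ℝ) / (q k : ℝ)) :
    ∀ ε ∈ Set.Ioo (0 : ℝ) 1, ∃ M₀ : ℕ, ∀ m ≥ M₀,
      ∃ k, R ≤ k ∧ k ≤ m ∧ (m : ℝ) * Real.log (2 - ε) < (q k : ℝ) := by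
  -- Main estimate: for k ≥ R, q k ≥ 2 ^ (a*k+b) / 4.
  have key : ∀ k ≥ R, (2:ℝ) ^ (a * k + b) / 4 ≤ (q k : ℝ) := by
    intro k hk
    obtain ⟨hp, hq, -, hval⟩ := hpq k hk
    set n := a * k + b with hn
    have hn2 : 2 ≤ n := hconv k hk
    set T : ℝ := ∑' m : ℕ, 1 / ((m : ℝ) + 2) ^ n with hT
    have hsum1 : Summable (fun m : ℕ => 1 / ((m : ℝ) + 1) ^ n) := by
      simpa using summable_aux n hn2 1
    have hsum2 : Summable (fun m : ℕ => 1 / ((m : ℝ) + 2) ^ n) := by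
      simpa using summable_aux n hn2 2
    -- zetaAP = 1 + T
    have hzeta : zetaAP a b k = 1 + T := by
      rw [zetaAP]
      have hcongr : (fun m : ℕ => 1 / ((m + 1 : ℕ) : ℝ) ^ (a * k + b))
          = fun m : ℕ => 1 / ((m : ℝ) + 1) ^ n := by
        funext m; push_cast; ring_nf; rw [hn]; ring
      rw [hcongr, Summable.tsum_eq_zero_add hsum1]
      have hc2 : ∀ m : ℕ, 1 / ((((m:ℕ)+1) : ℝ) + 1) ^ n = 1 / ((m : ℝ) + 2) ^ n := by
        intro m; push_cast; ring_nf
      simp only [Nat.cast_zero, zero_add, Nat.cast_add, Nat.cast_one]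
      rw [tsum_congr hc2, hT]
      congr 1
      norm_num
    -- T > 0
    have hTpos : 0 < T := by
      refine Summable.tsum_pos hsum2 (fun m => by positivity) 0 ?_
      positivity
    -- T ≤ 4 / 2 ^ n
    have hTle : T ≤ 4 / 2 ^ n := by
      have hle : ∀ m : ℕ, 1 / ((m : ℝ) + 2) ^ n
          ≤ (4 / 2 ^ n) * (1 / ((m : ℝ) + 1) - 1 / ((m : ℝ) + 2)) := by
        intro m
        have h1 : (0:ℝ) < (m:ℝ) + 1 := by positivity
        have h2 : (0:ℝ) < (m:ℝ) + 2 := by positivity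
        have hdiff : 1 / ((m : ℝ) + 1) - 1 / ((m : ℝ) + 2)
            = 1 / (((m:ℝ) + 1) * ((m:ℝ) + 2)) := by
          field_simp
          ring
        rw [hdiff, div_mul_div_comm, div_le_div_iff₀ (by positivity) (by positivity)]
        have hfac : ((m:ℝ) + 2) ^ n = ((m:ℝ)+2)^2 * ((m:ℝ)+2)^(n-2) := by
          rw [← pow_add]
          congr 1
          omega
        rw [hfac]
        have h2n : (2:ℝ) ^ n = 4 * 2 ^ (n - 2) := by
          have h22 : (2:ℝ) ^ n = 2^2 * 2^(n-2) := by
            rw [← pow_add]; congr 1; omega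
          rw [h22]; norm_num
        have hA : ((m:ℝ)+1) * ((m:ℝ)+2) ≤ ((m:ℝ)+2)^2 := by nlinarith
        have hB : (2:ℝ)^(n-2) ≤ ((m:ℝ)+2)^(n-2) := by
          apply pow_le_pow_left₀ (by norm_num)
          linarith
        have hmain := mul_le_mul hA hB (by positivity) (by positivity)
        calc (1:ℝ) * (2 ^ n * (((m:ℝ) + 1) * ((m:ℝ) + 2)))
            = 4 * (((m:ℝ)+1) * ((m:ℝ)+2) * 2^(n-2)) := by rw [h2n]; ring
          _ ≤ 4 * (((m:ℝ)+2)^2 * ((m:ℝ)+2)^(n-2)) := by linarith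
          _ = 4 * 1 * (((m:ℝ)+2)^2 * ((m:ℝ)+2)^(n-2)) := by ring
      have hmono := Summable.tsum_le_tsum hle hsum2 ((telescope_hasSum.summable).mul_left (4 / 2 ^ n))
      calc T ≤ ∑' m : ℕ, (4 / 2 ^ n) * (1 / ((m : ℝ) + 1) - 1 / ((m : ℝ) + 2)) := hmono
        _ = (4 / 2 ^ n) * 1 := by rw [tsum_mul_left, telescope_hasSum.tsum_eq]
        _ = 4 / 2 ^ n := by ring
    -- from rationality: q ≥ 1 / T
    have hqpos : (0:ℝ) < (q k : ℝ) := by exact_mod_cast hq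
    have hgt1 : (1:ℝ) < (p k : ℝ) / (q k : ℝ) := by
      rw [← hval, hzeta]; linarith
    have hpq' : (q k : ℝ) < (p k : ℝ) := by
      rwa [lt_div_iff₀ hqpos, one_mul] at hgt1
    have hpq2 : (q k : ℝ) + 1 ≤ (p k : ℝ) := by
      have : q k < p k := by exact_mod_cast hpq'
      exact_mod_cast this
    have hTge : 1 / (q k : ℝ) ≤ T := by
      have heq : 1 + T = (p k : ℝ) / (q k : ℝ) := by rw [← hzeta, hval]
      have hval2 : (1 + T) * (q k : ℝ) = (p k : ℝ) := by
        rw [heq, div_mul_cancel₀]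
        exact ne_of_gt hqpos
      rw [div_le_iff₀ hqpos]
      nlinarith
    have hfin : 1 / (q k : ℝ) ≤ 4 / 2 ^ n := le_trans hTge hTle
    rw [div_le_div_iff₀ hqpos (by positivity : (0:ℝ) < 2 ^ n)] at hfin
    linarith
  -- now the conclusion
  intro ε hε
  refine ⟨max R 3, fun m hm => ?_⟩
  have hmR : R ≤ m := le_trans (le_max_left _ _) hm
  have hm3 : 3 ≤ m := le_trans (le_max_right _ _) hm
  refine ⟨m, hmR, le_refl m, ?_⟩
  have hq := key m hmR
  have hlog : Real.log (2 - ε) < 1 := by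
    have he : (2:ℝ) < Real.exp 1 := by
      have := Real.add_one_lt_exp (by norm_num : (1:ℝ) ≠ 0)
      linarith
    calc Real.log (2 - ε) < Real.log (Real.exp 1) :=
          Real.log_lt_log (by linarith [hε.2]) (by linarith [hε.1])
      _ = 1 := Real.log_exp 1
  have hmpos : (0:ℝ) < (m:ℝ) := by
    have : 0 < m := by omega
    exact_mod_cast this
  have hstep : (m : ℝ) * Real.log (2 - ε) < (m : ℝ) := by nlinarith
  -- m < 2^(a*m+b)/4
  have hub : (m:ℝ) < (2:ℝ) ^ (a * m + b) / 4 := by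
    have h1 : m + 1 ≤ a * m + b := by nlinarith
    have h2 : (2:ℝ) ^ (m + 1) ≤ (2:ℝ) ^ (a * m + b) :=
      pow_le_pow_right₀ (by norm_num) h1
    have hc : (2:ℝ) * m < 2 ^ m := by exact_mod_cast two_mul_lt_two_pow m hm3
    have h3 : (2:ℝ) ^ (m + 1) = 2 * 2 ^ m := by rw [pow_succ]; ring
    linarith
  linarith
end

section
/- Let {h(k)}_{k≥2} be positive reals with H_n^{(r)}[h] > 0 for all n ≥ 1 and r ≥ K−2 (K ≥ 2 an integer). Then for all n ≥ 2 and r ≥ K−2, H_{n+1}^{(r)}[h] < H_n^{(r)}[h] · H_2^{(r+2(n−1))}[h] / H_1^{(r+2(n−1))}[h]. -/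
open Matrix

namespace HA
variable (h : ℕ → ℝ)

def M (n r : ℕ) : Matrix (Fin n) (Fin n) ℝ :=
  Matrix.of fun i j => h ((i : ℕ) + (j : ℕ) + 2 + r)

lemma hankel_eq (n r : ℕ) : hankel h n r = (M h n r).det := rfl

lemma M_transpose (n r : ℕ) : (M h n r)ᵀ = M h n r := by
  ext i j
  exact congrArg h (by omega)

lemma M_herm (n r : ℕ) : (M h n r).IsHermitian := by
  have : (M h n r)ᴴ = (M h n r)ᵀ := by
    ext i j; simp [conjTranspose_apply, transpose_apply]
  rw [Matrix.IsHermitian, this, M_transpose]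

def v (n r : ℕ) : Fin n → ℝ := fun i => h ((i : ℕ) + n + 2 + r)

def B (n r : ℕ) : Matrix (Fin n) (Fin 1) ℝ := Matrix.of fun i _ => v h n r i

def D (n r : ℕ) : Matrix (Fin 1) (Fin 1) ℝ := Matrix.of fun _ _ => h (n + n + 2 + r)

lemma block (n r : ℕ) :
    (M h (n+1) r).submatrix finSumFinEquiv finSumFinEquiv
      = fromBlocks (M h n r) (B h n r) (B h n r)ᴴ (D h n r) := by
  ext i j
  cases i with
  | inl i =>
    cases j with
    | inl j => simp [M]
    | inr j =>
      obtain rfl : j = 0 := Subsingleton.elim _ _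
      simp [M, B, v, fromBlocks]
  | inr i =>
    obtain rfl : i = 0 := Subsingleton.elim _ _
    cases j with
    | inl j =>
      simp [M, B, v, fromBlocks]
      exact congrArg h (by omega)
    | inr j =>
      obtain rfl : j = 0 := Subsingleton.elim _ _
      simp [M, D, fromBlocks]

end HA

namespace HA
variable (h : ℕ → ℝ)

lemma q_entry (n r : ℕ) (X : Matrix (Fin n) (Fin n) ℝ) :
    ((B h n r)ᴴ * X * B h n r) 0 0 = v h n r ⬝ᵥ (X *ᵥ v h n r) := by
  simp [B, Matrix.mul_apply, mulVec, dotProduct, Finset.mul_sum, Finset.sum_mul, mul_assoc]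
  rw [Finset.sum_comm]

lemma det_step (n r : ℕ) [Invertible (M h n r)] :
    hankel h (n+1) r
      = hankel h n r * (h (n + n + 2 + r) - v h n r ⬝ᵥ ((M h n r)⁻¹ *ᵥ v h n r)) := by
  have h1 : hankel h (n+1) r
      = (fromBlocks (M h n r) (B h n r) (B h n r)ᴴ (D h n r)).det := by
    rw [hankel_eq, ← det_submatrix_equiv_self finSumFinEquiv, block]
  rw [h1, det_fromBlocks₁₁, invOf_eq_nonsing_inv, det_fin_one, hankel_eq]
  congr 1
  rw [Matrix.sub_apply, q_entry]
  congr 1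

lemma posDef_M (K : ℕ) (hpos : ∀ k ≥ 2, 0 < h k)
    (hHpos : ∀ n ≥ 1, ∀ r ≥ K - 2, 0 < hankel h n r) :
    ∀ n, 1 ≤ n → ∀ r, K - 2 ≤ r → (M h n r).PosDef := by
  intro n
  induction n with
  | zero => omega
  | succ n ih =>
    intro _ r hr
    rcases Nat.eq_zero_or_pos n with hn0 | hn1
    · subst hn0
      show (M h 1 r).PosDef
      refine PosDef.of_dotProduct_mulVec_pos (M_herm h 1 r) fun x hx => ?_
      have hx0 : x 0 ≠ 0 := by
        intro h0; apply hx; funext i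
        obtain rfl : i = 0 := Subsingleton.elim _ _; exact h0
      have hpos2 : 0 < h (0 + 0 + 2 + r) := hpos _ (by omega)
      simp only [M, mulVec, dotProduct, Fin.sum_univ_one, of_apply, Pi.star_apply,
        star_trivial, Fin.isValue, Fin.val_zero]
      nlinarith [mul_self_pos.mpr hx0]
    · have hA := ih hn1 r hr
      haveI : Invertible (M h n r) := hA.isUnit.invertible
      have hdetn : 0 < hankel h n r := hHpos n hn1 r hr
      have hdet1 : 0 < hankel h (n+1) r := hHpos (n+1) (by omega) r hr
      set q := v h n r ⬝ᵥ ((M h n r)⁻¹ *ᵥ v h n r) with hq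
      have hS : 0 < h (n + n + 2 + r) - q := by
        nlinarith [det_step h n r, hdet1, hdetn]
      refine PosDef.of_dotProduct_mulVec_pos (M_herm h (n+1) r) fun x hx => ?_
      set e : Fin n ⊕ Fin 1 ≃ Fin (n+1) := finSumFinEquiv with he
      set y := x ∘ e with hy
      have key : star x ⬝ᵥ (M h (n+1) r *ᵥ x)
          = star y ᵥ* (fromBlocks (M h n r) (B h n r) (B h n r)ᴴ (D h n r)) ⬝ᵥ y := by
        rw [← block, ← dotProduct_mulVec, submatrix_mulVec_equiv]
        have h2 : y ∘ e.symm = x := by funext i; simp [hy]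
        rw [h2]
        have hstar : star y = star x ∘ e := rfl
        rw [hstar, comp_equiv_dotProduct_comp_equiv]
      rw [key, ← Sum.elim_comp_inl_inr y,
        schur_complement_eq₁₁ (B h n r) (D h n r) _ _ hA.1]
      set y₁ := y ∘ Sum.inl with hy1
      set y₂ := y ∘ Sum.inr with hy2
      set w := y₁ + ((M h n r)⁻¹ * B h n r) *ᵥ y₂ with hw
      have hterm1 : (0:ℝ) ≤ star w ᵥ* M h n r ⬝ᵥ w := by
        rw [← dotProduct_mulVec]
        exact hA.posSemidef.dotProduct_mulVec_nonneg w
      have hS00 : (D h n r - (B h n r)ᴴ * (M h n r)⁻¹ * B h n r) 0 0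
          = h (n + n + 2 + r) - q := by
        rw [Matrix.sub_apply, q_entry]; rfl
      have hterm2 : star y₂ ᵥ* (D h n r - (B h n r)ᴴ * (M h n r)⁻¹ * B h n r) ⬝ᵥ y₂
          = (h (n + n + 2 + r) - q) * (y₂ 0 * y₂ 0) := by
        rw [← hS00]
        simp [vecMul, dotProduct, Fin.sum_univ_one]
        ring
      rw [hterm2]
      rcases eq_or_ne (y₂ 0) 0 with h0 | h0
      · have hy20 : y₂ = 0 := by
          funext i; obtain rfl : i = 0 := Subsingleton.elim _ _; exact h0
        have hwy : w = y₁ := by rw [hw, hy20, mulVec_zero, add_zero]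
        have hy1ne : y₁ ≠ 0 := by
          intro h1
          apply hx
          have hyz : y = 0 := by
            funext i
            cases i with
            | inl i => exact congrFun h1 i
            | inr i =>
              obtain rfl : i = 0 := Subsingleton.elim _ _
              exact congrFun hy20 0
          funext i
          have : x i = y (e.symm i) := by simp [hy]
          rw [this, hyz]; rfl
        have : 0 < star y₁ ᵥ* M h n r ⬝ᵥ y₁ := by
          rw [← dotProduct_mulVec]
          exact hA.dotProduct_mulVec_pos hy1ne
        rw [hwy, h0]
        nlinarith [this]
      · have h2 : 0 < (h (n + n + 2 + r) - q) * (y₂ 0 * y₂ 0) :=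
          mul_pos hS (mul_self_pos.mpr h0)
        linarith

lemma cs_strict {k : ℕ} (A : Matrix (Fin k) (Fin k) ℝ) (hA : A.PosDef) (hAt : Aᵀ = A)
    (vv : Fin k → ℝ) (i0 : Fin k) (α β : ℝ) (hα : 0 < α)
    (hAii : A i0 i0 = α) (hvi : vv i0 = β)
    (hne : vv ≠ (β / α) • (A *ᵥ Pi.single i0 (1:ℝ))) :
    β * β < (vv ⬝ᵥ (A⁻¹ *ᵥ vv)) * α := by
  haveI : Invertible A := hA.isUnit.invertible
  have hdet : IsUnit A.det := isUnit_iff_ne_zero.mpr hA.det_pos.ne'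
  have hsym : ∀ a b : Fin k → ℝ, a ⬝ᵥ (A *ᵥ b) = b ⬝ᵥ (A *ᵥ a) := by
    intro a b
    rw [dotProduct_mulVec, ← mulVec_transpose, hAt, dotProduct_comm]
  set x := A⁻¹ *ᵥ vv with hx
  set e : Fin k → ℝ := Pi.single i0 (1 : ℝ) with he
  have hAx : A *ᵥ x = vv := by
    rw [hx, mulVec_mulVec, mul_nonsing_inv _ hdet, one_mulVec]
  have hedot : ∀ u : Fin k → ℝ, e ⬝ᵥ u = u i0 := by
    intro u; rw [he, single_dotProduct, one_mul]
  have heAx : e ⬝ᵥ (A *ᵥ x) = β := by rw [hAx, hedot, hvi]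
  have hxAe : x ⬝ᵥ (A *ᵥ e) = β := by rw [hsym]; exact heAx
  have heAe : e ⬝ᵥ (A *ᵥ e) = α := by
    rw [hedot, he, mulVec_single]
    show A i0 i0 * 1 = α
    rw [mul_one, hAii]
  have hxAx : x ⬝ᵥ (A *ᵥ x) = vv ⬝ᵥ x := by rw [hAx, dotProduct_comm]
  set z := x - (β / α) • e with hz
  have hzne : z ≠ 0 := by
    intro h0
    apply hne
    have hxe : x = (β / α) • e := by rwa [hz, sub_eq_zero] at h0
    rw [← hAx, hxe, mulVec_smul]
  have hqz : 0 < z ⬝ᵥ (A *ᵥ z) := by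
    have := hA.dotProduct_mulVec_pos hzne
    rwa [star_trivial] at this
  have hexp : z ⬝ᵥ (A *ᵥ z)
      = vv ⬝ᵥ x - 2 * (β / α) * β + (β / α) * ((β / α) * α) := by
    rw [hz, mulVec_sub, mulVec_smul, sub_dotProduct, smul_dotProduct,
      dotProduct_sub, dotProduct_sub, dotProduct_smul, dotProduct_smul,
      hxAx, hxAe, heAx, heAe]
    simp only [smul_eq_mul]
    ring
  rw [hexp] at hqz
  have h5 : (vv ⬝ᵥ x - 2 * (β / α) * β + (β / α) * ((β / α) * α)) * α
      = (vv ⬝ᵥ x) * α - β * β := by field_simp; ring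
  have h6 := mul_pos hqz hα
  rw [h5] at h6
  linarith

end HA

theorem hankel_ratio_telescoped (h : ℕ → ℝ) (K : ℕ) (hK : 2 ≤ K)
    (hpos : ∀ k ≥ 2, 0 < h k)
    (hHpos : ∀ n ≥ 1, ∀ r ≥ K - 2, 0 < hankel h n r) :
    ∀ n ≥ 2, ∀ r ≥ K - 2,
      hankel h (n + 1) r <
        hankel h n r * hankel h 2 (r + 2 * (n - 1)) / hankel h 1 (r + 2 * (n - 1)) := by
  intro n hn r hr
  obtain ⟨m, rfl⟩ : ∃ m, n = m + 2 := ⟨n - 2, by omega⟩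
  have hA : (HA.M h (m+2) r).PosDef := HA.posDef_M h K hpos hHpos (m+2) (by omega) r hr
  haveI : Invertible (HA.M h (m+2) r) := hA.isUnit.invertible
  have hs : m + 2 - 1 = m + 1 := by omega
  have hαpos : 0 < h (2*m + 4 + r) := hpos _ (by omega)
  have hdetn : 0 < hankel h (m+2) r := hHpos (m+2) (by omega) r hr
  have h1 : hankel h 1 (r + 2 * (m + 2 - 1)) = h (2*m + 4 + r) := by
    rw [HA.hankel_eq, det_fin_one]
    exact congrArg h (by simp [HA.M]; omega)
  have h2 : hankel h 2 (r + 2 * (m + 2 - 1))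
      = h (2*m + 4 + r) * h ((m+2) + (m+2) + 2 + r) - h (2*m + 5 + r) * h (2*m + 5 + r) := by
    rw [HA.hankel_eq, det_fin_two]
    have e00 : HA.M h 2 (r + 2 * (m + 2 - 1)) 0 0 = h (2*m + 4 + r) :=
      congrArg h (by simp [HA.M]; omega)
    have e11 : HA.M h 2 (r + 2 * (m + 2 - 1)) 1 1 = h ((m+2) + (m+2) + 2 + r) :=
      congrArg h (by simp [HA.M]; omega)
    have e01 : HA.M h 2 (r + 2 * (m + 2 - 1)) 0 1 = h (2*m + 5 + r) :=
      congrArg h (by simp [HA.M]; omega)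
    have e10 : HA.M h 2 (r + 2 * (m + 2 - 1)) 1 0 = h (2*m + 5 + r) :=
      congrArg h (by simp [HA.M]; omega)
    rw [e00, e11, e01, e10]
  have hstep := HA.det_step h (m+2) r
  set i0 : Fin (m+2) := ⟨m+1, by omega⟩ with hi0
  set i1 : Fin (m+2) := ⟨m, by omega⟩ with hi1
  have hne : HA.v h (m+2) r
      ≠ (h (2*m + 5 + r) / h (2*m + 4 + r)) • (HA.M h (m+2) r *ᵥ Pi.single i0 (1:ℝ)) := by
    intro heq
    have hAe : HA.M h (m+2) r *ᵥ Pi.single i0 (1:ℝ) = fun j : Fin (m+2) => h ((j:ℕ) + m + 3 + r) := by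
      funext j
      rw [mulVec_single]
      show HA.M h (m+2) r j i0 * 1 = _
      rw [mul_one]
      exact congrArg h (by simp [HA.M, hi0]; omega)
    have hrow0 : HA.M h (m+2) (r+1) i0 = HA.v h (m+2) r := by
      funext j; exact congrArg h (by simp [HA.M, HA.v, hi0]; omega)
    have hrow1 : HA.M h (m+2) (r+1) i1
        = HA.M h (m+2) r *ᵥ Pi.single i0 (1:ℝ) := by
      funext j; rw [hAe]; exact congrArg h (by simp [HA.M, hi1]; omega)
    have hprop : HA.M h (m+2) (r+1) i0
        = (h (2*m + 5 + r) / h (2*m + 4 + r)) • HA.M h (m+2) (r+1) i1 := by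
      rw [hrow0, hrow1, heq]
    have hne01 : i0 ≠ i1 := by
      intro hcon
      have := congrArg Fin.val hcon
      simp [hi0, hi1] at this
    have e1 : ((HA.M h (m+2) (r+1)).updateRow i0
        ((HA.M h (m+2) (r+1)) i1)).det = 0 := by
      apply Matrix.det_zero_of_row_eq hne01
      rw [Matrix.updateRow_self, Matrix.updateRow_ne hne01.symm]
    have hdet0 : (HA.M h (m+2) (r+1)).det = 0 := by
      calc (HA.M h (m+2) (r+1)).det
          = ((HA.M h (m+2) (r+1)).updateRow i0 ((HA.M h (m+2) (r+1)) i0)).det := by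
            rw [Matrix.updateRow_eq_self]
        _ = (h (2*m + 5 + r) / h (2*m + 4 + r))
            * ((HA.M h (m+2) (r+1)).updateRow i0 ((HA.M h (m+2) (r+1)) i1)).det := by
            rw [hprop, Matrix.det_updateRow_smul]
        _ = 0 := by rw [e1, mul_zero]
    have hposM : 0 < (HA.M h (m+2) (r+1)).det := by
      rw [← HA.hankel_eq]
      exact hHpos (m+2) (by omega) (r+1) (by omega)
    exact hposM.ne' hdet0
  have key := HA.cs_strict (HA.M h (m+2) r) hA (HA.M_transpose h (m+2) r)
    (HA.v h (m+2) r) i0 (h (2*m + 4 + r)) (h (2*m + 5 + r)) hαpos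
    (congrArg h (by simp [HA.M, hi0]; omega)) (congrArg h (by simp [HA.v, hi0]; omega)) hne
  rw [hstep, h1, h2, lt_div_iff₀ hαpos]
  nlinarith [mul_pos hdetn (by linarith [key] :
    (0:ℝ) < (HA.v h (m+2) r ⬝ᵥ ((HA.M h (m+2) r)⁻¹ *ᵥ HA.v h (m+2) r)) * h (2*m + 4 + r)
      - h (2*m + 5 + r) * h (2*m + 5 + r))]
end
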